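/- arXiv:1506.07623 — 5 statements merged into one kernel-verified Lean document; each statement's English description precedes it below -/
import Mathlib

section
/- Let τ be a θ-compatible stopping time such that 𝔼_x τ < ∞ for every x ∈ 𝐗, and assume QR(1) is bounded on 𝐗. Then S* and R* are reciprocal linear bijections between the set of finite P-invariant measures on 𝐗 and the set of finite Q-invariant measures on 𝐗, and these bijections preserve ergodicity: if μ is P-ergodic then S*μ is Q-ergodic, and if ν is Q-ergodic then R*ν is P-ergodic. -/
open MeasureTheory Filter Set Topology
open scoped ENNReal NNReal ENat

noncomputable section

/-- The shift on path space. -/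
def pshift {X : Type*} (ω : ℕ → X) : ℕ → X := fun n => ω (n + 1)

/-- The natural filtration on path space: the σ-algebra generated by the first `n+1`
coordinates. -/
def pathFiltration (X : Type*) [MeasurableSpace X] (n : ℕ) : MeasurableSpace (ℕ → X) :=
  MeasurableSpace.comap (fun ω (i : Fin (n + 1)) => ω (i : ℕ)) inferInstance

/-- A Markov chain on `X`, given by the family of its path-space laws `ℙ_x`. -/
structure MarkovChain (X : Type*) [MeasurableSpace X] where
  law : X → Measure (ℕ → X)
  prob : ∀ x, IsProbabilityMeasure (law x)
  meas_law : Measurable law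
  start : ∀ x, (law x).map (fun ω => ω 0) = Measure.dirac x
  markov : ∀ (x : X) (n : ℕ) (A : Set (ℕ → X)),
      MeasurableSet[pathFiltration X n] A → ∀ g : (ℕ → X) → ℝ≥0∞, Measurable g →
      ∫⁻ ω in A, g (fun k => ω (k + n)) ∂law x = ∫⁻ ω in A, ∫⁻ η, g η ∂law (ω n) ∂law x

variable {X : Type*} [MeasurableSpace X]

/-- A stopping time on path space, with values in `ℕ∞`. -/
def IsPathStoppingTime (τ : (ℕ → X) → ℕ∞) : Prop :=
  ∀ n : ℕ, MeasurableSet[pathFiltration X n] {ω | τ ω = (n : ℕ∞)}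

/-- `τ` is θ-compatible: `ℙ_x(τ = 0) = 0` and, almost everywhere, `τ ≥ 2` implies
`τ ∘ θ = τ - 1`. -/
def ThetaCompatible (M : MarkovChain X) (τ : (ℕ → X) → ℕ∞) : Prop :=
  (∀ x, M.law x {ω | τ ω = 0} = 0) ∧
    ∀ x, ∀ᵐ ω ∂M.law x, 2 ≤ τ ω → τ (pshift ω) = τ ω - 1

/-- The Markov operator `P` on nonnegative functions: `Pf(x) = 𝔼_x f(X_1)`. -/
def Pop (M : MarkovChain X) (f : X → ℝ≥0∞) (x : X) : ℝ≥0∞ := ∫⁻ ω, f (ω 1) ∂M.law x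

/-- The induced operator `Q`: `Qg(x) = ∫_{τ<∞} g(X_τ) dℙ_x`. -/
def Qop (M : MarkovChain X) (τ : (ℕ → X) → ℕ∞) (g : X → ℝ≥0∞) (x : X) : ℝ≥0∞ :=
  ∫⁻ ω in {ω | τ ω ≠ ⊤}, g (ω (τ ω).toNat) ∂M.law x

/-- The operator `S`: `Sf(x) = ∫_{τ=1} f(X_1) dℙ_x`. -/
def Sop (M : MarkovChain X) (τ : (ℕ → X) → ℕ∞) (f : X → ℝ≥0∞) (x : X) : ℝ≥0∞ :=
  ∫⁻ ω in {ω | τ ω = 1}, f (ω 1) ∂M.law x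

/-- The operator `R`: `Rf(x) = ∫_{τ<∞} (f(X_0) + ⋯ + f(X_{τ-1})) dℙ_x`. -/
def Rop (M : MarkovChain X) (τ : (ℕ → X) → ℕ∞) (f : X → ℝ≥0∞) (x : X) : ℝ≥0∞ :=
  ∫⁻ ω in {ω | τ ω ≠ ⊤}, ∑ k ∈ Finset.range (τ ω).toNat, f (ω k) ∂M.law x

/-- `𝔼_x τ`, with values in `[0,∞]`. -/
def EtauE (M : MarkovChain X) (τ : (ℕ → X) → ℕ∞) (x : X) : ℝ≥0∞ :=
  ∫⁻ ω, (τ ω : ℝ≥0∞) ∂M.law x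

/-- `μ` is `P`-invariant: `∫ Pf dμ = ∫ f dμ` for every bounded nonnegative borelian `f`. -/
def PInvariant (M : MarkovChain X) (μ : Measure X) : Prop :=
  ∀ f : X → ℝ≥0∞, Measurable f → (∃ C : ℝ≥0∞, C ≠ ⊤ ∧ ∀ x, f x ≤ C) →
    ∫⁻ x, Pop M f x ∂μ = ∫⁻ x, f x ∂μ

/-- `ν` is `Q`-invariant: `∫ Qf dν = ∫ f dν` for every bounded nonnegative borelian `f`. -/
def QInvariant (M : MarkovChain X) (τ : (ℕ → X) → ℕ∞) (ν : Measure X) : Prop :=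
  ∀ f : X → ℝ≥0∞, Measurable f → (∃ C : ℝ≥0∞, C ≠ ⊤ ∧ ∀ x, f x ≤ C) →
    ∫⁻ x, Qop M τ f x ∂ν = ∫⁻ x, f x ∂ν

/-- `ν = S*μ`, i.e. `ν(A) = ∫ S𝟙_A dμ` for every borelian `A`. -/
def SstarEq (M : MarkovChain X) (τ : (ℕ → X) → ℕ∞) (μ ν : Measure X) : Prop :=
  ∀ A : Set X, MeasurableSet A → ν A = ∫⁻ x, Sop M τ (A.indicator 1) x ∂μ

/-- `m = R*ν`, i.e. `m(A) = ∫ R𝟙_A dν` for every borelian `A`. -/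
def RstarEq (M : MarkovChain X) (τ : (ℕ → X) → ℕ∞) (ν m : Measure X) : Prop :=
  ∀ A : Set X, MeasurableSet A → m A = ∫⁻ x, Rop M τ (A.indicator 1) x ∂ν

/-- the real-valued Markov operator -/
def Pr (M : MarkovChain X) (f : X → ℝ) (x : X) : ℝ := ∫ ω, f (ω 1) ∂M.law x

/-- the real-valued induced operator -/
def Qr (M : MarkovChain X) (τ : (ℕ → X) → ℕ∞) (g : X → ℝ) (x : X) : ℝ :=
  ∫ ω in {ω | τ ω ≠ ⊤}, g (ω (τ ω).toNat) ∂M.law x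

/-- the real-valued operator `S` -/
def Sr (M : MarkovChain X) (τ : (ℕ → X) → ℕ∞) (f : X → ℝ) (x : X) : ℝ :=
  ∫ ω in {ω | τ ω = 1}, f (ω 1) ∂M.law x

/-- the real-valued operator `R` -/
def Rr (M : MarkovChain X) (τ : (ℕ → X) → ℕ∞) (f : X → ℝ) (x : X) : ℝ :=
  ∫ ω in {ω | τ ω ≠ ⊤}, ∑ k ∈ Finset.range (τ ω).toNat, f (ω k) ∂M.law x

/-- `𝔼_x τ` as a real number. -/
def Etau (M : MarkovChain X) (τ : (ℕ → X) → ℕ∞) (x : X) : ℝ := (EtauE M τ x).toReal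

/-- `B_u = sup (Pu - u) + 1`. -/
def Bu (M : MarkovChain X) (u : X → ℝ) : ℝ :=
  sSup (Set.range fun x => Pr M u x - u x) + 1

/-- the weight `u - Pu + B_u` defining the space `𝓔_u`. -/
def wE (M : MarkovChain X) (u : X → ℝ) : X → ℝ := fun x => u x - Pr M u x + Bu M u

/-- `u` is a drift function: `u ≥ 1`, `u - Pu` is bounded below and, with
`B_u = sup (Pu - u) + 1`, the functions `Qu`, `𝔼τ/u` and `P(u-Pu+B_u)/(u-Pu+B_u)` are
bounded. -/
structure IsDrift (M : MarkovChain X) (τ : (ℕ → X) → ℕ∞) (u : X → ℝ) : Prop where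
  meas : Measurable u
  one_le : ∀ x, 1 ≤ u x
  int_one : ∀ x, Integrable (fun ω => u (ω 1)) (M.law x)
  bdd : BddAbove (Set.range fun x => Pr M u x - u x)
  etau_ne_top : ∀ x, EtauE M τ x ≠ ⊤
  qu_bdd : ∃ C : ℝ, ∀ x, Qr M τ u x ≤ C
  etau_div_bdd : ∃ C : ℝ, ∀ x, Etau M τ x ≤ C * u x
  pw_bdd : ∃ C : ℝ, ∀ x, Pr M (wE M u) x ≤ C * wE M u x

/-- membership in the weighted space `𝓕^p_v` : `f` is borelian and `|f| ≤ C v^{1/p}`. -/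
def MemWp (v : X → ℝ) (p : ℝ) (f : X → ℝ) : Prop :=
  Measurable f ∧ ∃ C : ℝ, ∀ x, |f x| ≤ C * v x ^ (1 / p)

/-- the norm of the weighted space `𝓕^p_v` : `‖f‖ = sup_x |f(x)|/v(x)^{1/p}`. -/
def normWp (v : X → ℝ) (p : ℝ) (f : X → ℝ) : ℝ := ⨆ x, |f x| / v x ^ (1 / p)

/-- ergodicity among a class of invariant measures: a finite nonzero invariant measure is
ergodic if it is not a nontrivial convex combination of two distinct invariant probability
measures. -/
def ErgodicAmong (Inv : Measure X → Prop) (μ : Measure X) : Prop :=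
  μ ≠ 0 ∧ ∀ (ν₁ ν₂ : Measure X) (t : ℝ≥0∞), Inv ν₁ → Inv ν₂ →
    IsProbabilityMeasure ν₁ → IsProbabilityMeasure ν₂ → 0 < t → t < 1 →
    μ = μ Set.univ • (t • ν₁ + (1 - t) • ν₂) → ν₁ = ν₂

namespace Stmt4Aux

variable {X : Type*} [MeasurableSpace X]

lemma pathFiltration_le (n : ℕ) :
    pathFiltration X n ≤ (inferInstance : MeasurableSpace (ℕ → X)) :=
  Measurable.comap_le (measurable_pi_lambda _ fun i => measurable_pi_apply _)

lemma pathFiltration_mono {m n : ℕ} (h : m ≤ n) :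
    pathFiltration X m ≤ pathFiltration X n := by
  intro A hA
  obtain ⟨B, hB, rfl⟩ := hA
  refine ⟨(fun v : Fin (n+1) → X => fun i : Fin (m+1) => v (Fin.castLE (by omega) i)) ⁻¹' B,
    (measurable_pi_lambda _ fun i => measurable_pi_apply _) hB, rfl⟩

variable (M : MarkovChain X) (τ : (ℕ → X) → ℕ∞)

/-- the operator `T^k`, as a single integral -/
def tk (k : ℕ) (f : X → ℝ≥0∞) (x : X) : ℝ≥0∞ :=
  ∫⁻ ω in {ω | (k : ℕ∞) < τ ω}, f (ω k) ∂M.law x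

/-- the operator `f ↦ (x ↦ 𝔼_x[1_{τ = n} f(X_n)])` -/
def qk (n : ℕ) (f : X → ℝ≥0∞) (x : X) : ℝ≥0∞ :=
  ∫⁻ ω in {ω | τ ω = (n : ℕ∞)}, f (ω n) ∂M.law x

variable {τ}

lemma enat_le_coe_iff (a : ℕ∞) (k : ℕ) : a ≤ (k : ℕ∞) ↔ ∃ m ≤ k, a = (m : ℕ∞) := by
  cases a using ENat.recTopCoe with
  | top => simp
  | coe m =>
    simp only [Nat.cast_le, Nat.cast_inj]
    constructor
    · exact fun h => ⟨m, h, rfl⟩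
    · rintro ⟨m', h, rfl⟩; exact h

lemma measurableSet_qset (hst : IsPathStoppingTime τ) (n : ℕ) :
    MeasurableSet {ω : ℕ → X | τ ω = (n : ℕ∞)} :=
  pathFiltration_le n _ (hst n)

lemma measurableSet_tset_filt (hst : IsPathStoppingTime τ) (k : ℕ) :
    MeasurableSet[pathFiltration X k] {ω : ℕ → X | (k : ℕ∞) < τ ω} := by
  have : {ω : ℕ → X | (k : ℕ∞) < τ ω} =
      (⋃ m ∈ Finset.range (k+1), {ω : ℕ → X | τ ω = (m : ℕ∞)})ᶜ := by
    ext ω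
    simp only [Set.mem_compl_iff, Set.mem_iUnion, Set.mem_setOf_eq, Finset.mem_range,
      not_exists, not_lt, exists_prop]
    rw [← not_le, enat_le_coe_iff]
    push_neg
    constructor
    · intro h m hm heq; exact (h m (by omega) heq).elim
    · intro h m hm heq; exact (h m (by omega) heq).elim
  rw [this]
  exact (MeasurableSet.biUnion (Finset.range (k+1)).countable_toSet
    (fun m hm => pathFiltration_mono (by simp at hm; omega) _ (hst m))).compl

lemma measurableSet_tset (hst : IsPathStoppingTime τ) (k : ℕ) :
    MeasurableSet {ω : ℕ → X | (k : ℕ∞) < τ ω} :=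
  pathFiltration_le k _ (measurableSet_tset_filt hst k)

lemma measurableSet_fin (hst : IsPathStoppingTime τ) :
    MeasurableSet {ω : ℕ → X | τ ω ≠ ⊤} := by
  have : {ω : ℕ → X | τ ω ≠ ⊤} = ⋃ n : ℕ, {ω : ℕ → X | τ ω = (n : ℕ∞)} := by
    ext ω
    simp only [Set.mem_setOf_eq, Set.mem_iUnion]
    cases h : τ ω using ENat.recTopCoe with
    | top => simp
    | coe m => simpa using ⟨m, rfl⟩
  rw [this]
  exact MeasurableSet.iUnion fun n => measurableSet_qset hst n

lemma measurable_setlint {A : Set (ℕ → X)} (hA : MeasurableSet A) {h : (ℕ → X) → ℝ≥0∞}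
    (hh : Measurable h) : Measurable fun x => ∫⁻ ω in A, h ω ∂M.law x := by
  simp_rw [← lintegral_indicator hA]
  exact (Measure.measurable_lintegral (hh.indicator hA)).comp M.meas_law

lemma measurable_tk (hst : IsPathStoppingTime τ) (k : ℕ) {f : X → ℝ≥0∞} (hf : Measurable f) :
    Measurable (tk M τ k f) :=
  measurable_setlint M (measurableSet_tset hst k) (hf.comp (measurable_pi_apply k))

lemma measurable_qk (hst : IsPathStoppingTime τ) (n : ℕ) {f : X → ℝ≥0∞} (hf : Measurable f) :
    Measurable (qk M τ n f) :=
  measurable_setlint M (measurableSet_qset hst n) (hf.comp (measurable_pi_apply n))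

lemma Sop_eq_qk (f : X → ℝ≥0∞) : Sop M τ f = qk M τ 1 f := by
  funext x
  unfold Sop qk
  norm_cast

end Stmt4Aux
namespace Stmt4Aux

variable {X : Type*} [MeasurableSpace X]
variable {M : MarkovChain X} {τ : (ℕ → X) → ℕ∞}

lemma tau_top_null (hst : IsPathStoppingTime τ) (hτ : ∀ x, EtauE M τ x ≠ ⊤) (x : X) :
    M.law x {ω | τ ω = ⊤} = 0 := by
  by_contra h
  apply hτ x
  have hb : ∀ ω, ({ω | τ ω = ⊤}.indicator (fun _ => (⊤ : ℝ≥0∞))) ω ≤ (τ ω : ℝ≥0∞) := by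
    intro ω
    by_cases hω : ω ∈ {ω | τ ω = ⊤}
    · simp only [Set.indicator_of_mem hω]
      simp only [Set.mem_setOf_eq] at hω
      simp [hω]
    · simp [Set.indicator_of_notMem hω]
  have hmeas : MeasurableSet {ω : ℕ → X | τ ω = ⊤} := by
    have : {ω : ℕ → X | τ ω = ⊤} = {ω : ℕ → X | τ ω ≠ ⊤}ᶜ := by
      ext ω; simp
    rw [this]; exact (measurableSet_fin hst).compl
  have hle : (⊤ : ℝ≥0∞) * M.law x {ω | τ ω = ⊤} ≤ EtauE M τ x := by
    rw [← lintegral_indicator_const hmeas]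
    exact lintegral_mono hb
  rw [ENNReal.top_mul h] at hle
  exact top_le_iff.mp hle

lemma tau_zero_null (hθ : ThetaCompatible M τ) (x : X) :
    M.law x {ω | τ ω = 0} = 0 := hθ.1 x

/-- a.e., `0 < τ` -/
lemma ae_pos (hθ : ThetaCompatible M τ) (x : X) :
    ∀ᵐ ω ∂M.law x, (0 : ℕ∞) < τ ω := by
  have h0 := hθ.1 x
  rw [ae_iff]
  convert h0 using 2
  ext ω
  simp [pos_iff_ne_zero]

end Stmt4Aux
namespace Stmt4Aux

variable {X : Type*} [MeasurableSpace X]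
variable {M : MarkovChain X} {τ : (ℕ → X) → ℕ∞}

lemma tk_zero (hθ : ThetaCompatible M τ) {f : X → ℝ≥0∞} (hf : Measurable f) (x : X) :
    tk M τ 0 f x = f x := by
  have hset : {ω : ℕ → X | (0 : ℕ∞) < τ ω} =ᵐ[M.law x] (Set.univ : Set (ℕ → X)) := by
    rw [Filter.eventuallyEq_univ]
    exact Filter.Eventually.mono (ae_pos hθ x) (fun ω hω => hω)
  unfold tk
  simp only [Nat.cast_zero]
  rw [Measure.restrict_congr_set hset, Measure.restrict_univ]
  have : ∫⁻ ω, f (ω 0) ∂M.law x = ∫⁻ y, f y ∂((M.law x).map (fun ω => ω 0)) :=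
    (lintegral_map hf (measurable_pi_apply 0)).symm
  rw [this, M.start x, lintegral_dirac' x hf]

/-- `P = S + T` pointwise. -/
lemma Pop_eq_add (hst : IsPathStoppingTime τ) (hθ : ThetaCompatible M τ)
    (f : X → ℝ≥0∞) (x : X) :
    Pop M f x = Sop M τ f x + tk M τ 1 f x := by
  have hset : (Set.univ : Set (ℕ → X)) =ᵐ[M.law x]
      (({ω : ℕ → X | τ ω = (1 : ℕ∞)} ∪ {ω : ℕ → X | (1 : ℕ∞) < τ ω} : Set (ℕ → X))) := by
    apply Filter.EventuallyEq.symm; rw [Filter.eventuallyEq_univ]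
    refine Filter.Eventually.mono (ae_pos hθ x) (fun ω hω => ?_)
    rcases eq_or_lt_of_le ((ENat.add_one_le_iff (by simp)).2 hω) with h | h
    · exact Or.inl (by simpa using h.symm)
    · exact Or.inr (by simpa using h)
  have hdisj : Disjoint {ω : ℕ → X | τ ω = (1 : ℕ∞)} {ω : ℕ → X | (1 : ℕ∞) < τ ω} := by
    rw [Set.disjoint_left]
    intro ω h1 h2
    simp only [Set.mem_setOf_eq] at h1 h2
    exact absurd h1 (ne_of_gt h2)
  have h1 : MeasurableSet {ω : ℕ → X | (1 : ℕ∞) < τ ω} := by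
    have := measurableSet_tset hst 1; norm_num at this ⊢; exact this
  calc Pop M f x = ∫⁻ ω in Set.univ, f (ω 1) ∂M.law x := by rw [Measure.restrict_univ]; rfl
    _ = ∫⁻ ω in ({ω : ℕ → X | τ ω = (1:ℕ∞)} ∪ {ω : ℕ → X | (1:ℕ∞) < τ ω} : Set (ℕ → X)),
          f (ω 1) ∂M.law x := by rw [Measure.restrict_congr_set hset]
    _ = Sop M τ f x + tk M τ 1 f x := by
        rw [lintegral_union h1 hdisj]
        unfold Sop tk
        norm_num

lemma Qop_eq_tsum (hst : IsPathStoppingTime τ) (hθ : ThetaCompatible M τ)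
    (f : X → ℝ≥0∞) (x : X) :
    Qop M τ f x = ∑' n : ℕ, qk M τ (n + 1) f x := by
  have hsets : ∀ n : ℕ, MeasurableSet {ω : ℕ → X | τ ω = ((n+1 : ℕ) : ℕ∞)} :=
    fun n => measurableSet_qset hst (n+1)
  have hdisj : Pairwise (Function.onFun Disjoint
      (fun n : ℕ => {ω : ℕ → X | τ ω = ((n+1 : ℕ) : ℕ∞)})) := by
    intro m n hmn
    rw [Function.onFun, Set.disjoint_left]
    intro ω h1 h2
    simp only [Set.mem_setOf_eq] at h1 h2
    rw [h1] at h2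
    have : m + 1 = n + 1 := by exact_mod_cast h2
    omega
  have hae : {ω : ℕ → X | τ ω ≠ ⊤} =ᵐ[M.law x]
      (⋃ n : ℕ, {ω : ℕ → X | τ ω = ((n+1 : ℕ) : ℕ∞)}) := by
    rw [Filter.eventuallyEq_set]
    refine Filter.Eventually.mono (ae_pos hθ x) (fun ω hω => ?_)
    simp only [Set.mem_setOf_eq, Set.mem_iUnion]
    cases h : τ ω using ENat.recTopCoe with
    | top =>
      refine iff_of_false (by simp [h]) ?_
      push_neg
      intro n hn
      exact absurd hn.symm (ENat.coe_ne_top (n+1))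
    | coe m =>
      rw [h] at hω
      have hm : 0 < m := by exact_mod_cast hω
      simp only [ne_eq, ENat.coe_ne_top, not_false_eq_true, true_iff]
      refine ⟨m - 1, by exact_mod_cast (by omega : m = m - 1 + 1)⟩
  unfold Qop
  rw [Measure.restrict_congr_set hae, Measure.restrict_iUnion hdisj hsets,
    lintegral_sum_measure]
  congr 1
  funext n
  refine setLIntegral_congr_fun (hsets n) (fun ω hω => ?_)
  simp only [Set.mem_setOf_eq] at hω
  rw [hω]
  norm_cast

lemma Rop_eq_tsum (hst : IsPathStoppingTime τ) (hτ : ∀ x, EtauE M τ x ≠ ⊤)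
    {f : X → ℝ≥0∞} (hf : Measurable f) (x : X) :
    Rop M τ f x = ∑' k : ℕ, tk M τ k f x := by
  have hae : {ω : ℕ → X | τ ω ≠ ⊤} =ᵐ[M.law x] (Set.univ : Set (ℕ → X)) := by
    rw [MeasureTheory.ae_eq_univ]
    have : {ω : ℕ → X | τ ω ≠ ⊤}ᶜ = {ω : ℕ → X | τ ω = ⊤} := by ext ω; simp
    rw [this]
    exact tau_top_null hst hτ x
  unfold Rop
  rw [Measure.restrict_congr_set hae, Measure.restrict_univ]
  have hpt : ∀ᵐ ω ∂M.law x, (∑ k ∈ Finset.range (τ ω).toNat, f (ω k)) =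
      ∑' k : ℕ, ({ω' : ℕ → X | (k : ℕ∞) < τ ω'}.indicator (fun ω' => f (ω' k))) ω := by
    have hfin : ∀ᵐ ω ∂M.law x, τ ω ≠ ⊤ := by
      rw [ae_iff]
      convert tau_top_null hst hτ x using 2
      ext ω; simp
    refine Filter.Eventually.mono hfin (fun ω hω => ?_)
    rw [tsum_eq_sum (s := Finset.range (τ ω).toNat) ?_]
    · refine (Finset.sum_congr rfl (fun k hk => ?_)).symm
      rw [Finset.mem_range] at hk
      refine Set.indicator_of_mem ?_ _
      show (k : ℕ∞) < τ ω
      rw [← ENat.coe_toNat hω]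
      exact_mod_cast hk
    · intro k hk
      rw [Finset.mem_range] at hk
      refine Set.indicator_of_notMem ?_ _
      show ¬ (k : ℕ∞) < τ ω
      rw [← ENat.coe_toNat hω]
      push_neg at hk ⊢
      exact_mod_cast hk
  have hmeas : ∀ k : ℕ, Measurable fun ω' : ℕ → X => f (ω' k) :=
    fun k => hf.comp (measurable_pi_apply k)
  rw [lintegral_congr_ae hpt, lintegral_tsum (fun k =>
    ((hmeas k).indicator (measurableSet_tset hst k)).aemeasurable)]
  congr 1
  funext k
  rw [lintegral_indicator (measurableSet_tset hst k)]
  rfl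

end Stmt4Aux
namespace Stmt4Aux

variable {X : Type*} [MeasurableSpace X]
variable {M : MarkovChain X} {τ : (ℕ → X) → ℕ∞}

lemma two_le_iff_one_lt (t : ℕ∞) : 2 ≤ t ↔ ((1:ℕ):ℕ∞) < t := by
  rw [show ((1:ℕ):ℕ∞) = (1:ℕ∞) from rfl, show (2:ℕ∞) = 1 + 1 from rfl,
    ENat.add_one_le_iff (by simp)]

lemma sub_one_lt_iff {t : ℕ∞} (ht : 2 ≤ t) (n : ℕ) :
    (n:ℕ∞) < t - 1 ↔ ((n+1:ℕ):ℕ∞) < t := by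
  cases t using ENat.recTopCoe with
  | top =>
    have h1 : (⊤:ℕ∞) - 1 = ⊤ := by
      rw [show (1:ℕ∞) = ((1:ℕ):ℕ∞) from rfl, ENat.top_sub_coe]
    rw [h1]
    exact iff_of_true (ENat.coe_lt_top n) (ENat.coe_lt_top (n+1))
  | coe m =>
    have hm : 2 ≤ m := by exact_mod_cast ht
    rw [show (1:ℕ∞) = ((1:ℕ):ℕ∞) from rfl, ← ENat.coe_sub]
    exact_mod_cast (by omega : n < m - 1 ↔ n + 1 < m)

lemma sub_one_eq_iff {t : ℕ∞} (ht : 2 ≤ t) (m : ℕ) :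
    t - 1 = (m:ℕ∞) ↔ t = ((m+1:ℕ):ℕ∞) := by
  cases t using ENat.recTopCoe with
  | top =>
    have h1 : (⊤:ℕ∞) - 1 = ⊤ := by
      rw [show (1:ℕ∞) = ((1:ℕ):ℕ∞) from rfl, ENat.top_sub_coe]
    rw [h1]
    exact iff_of_false (fun h => (ENat.coe_ne_top m) h.symm)
      (fun h => (ENat.coe_ne_top (m+1)) h.symm)
  | coe k =>
    have hk : 2 ≤ k := by exact_mod_cast ht
    rw [show (1:ℕ∞) = ((1:ℕ):ℕ∞) from rfl, ← ENat.coe_sub]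
    exact_mod_cast (by omega : k - 1 = m ↔ k = m + 1)

/-- the Markov property at time 1 -/
lemma markov_one (x : X) {A : Set (ℕ → X)} (hA : MeasurableSet[pathFiltration X 1] A)
    {g : (ℕ → X) → ℝ≥0∞} (hg : Measurable g) :
    ∫⁻ ω in A, g (pshift ω) ∂M.law x = ∫⁻ ω in A, ∫⁻ η, g η ∂M.law (ω 1) ∂M.law x :=
  M.markov x 1 A hA g hg

/-- `T (T^n f) = T^{n+1} f`. -/
lemma tk_step (hst : IsPathStoppingTime τ) (hθ : ThetaCompatible M τ)
    {f : X → ℝ≥0∞} (hf : Measurable f) (n : ℕ) (x : X) :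
    tk M τ 1 (tk M τ n f) x = tk M τ (n+1) f x := by
  set A : Set (ℕ → X) := {ω | ((1:ℕ):ℕ∞) < τ ω} with hA_def
  have hA : MeasurableSet[pathFiltration X 1] A := measurableSet_tset_filt hst 1
  have hA' : MeasurableSet A := measurableSet_tset hst 1
  set G : (ℕ → X) → ℝ≥0∞ := {η : ℕ → X | (n:ℕ∞) < τ η}.indicator (fun η => f (η n)) with hG_def
  have hG : Measurable G :=
    (hf.comp (measurable_pi_apply n)).indicator (measurableSet_tset hst n)
  have h1 : tk M τ 1 (tk M τ n f) x = ∫⁻ ω in A, ∫⁻ η, G η ∂M.law (ω 1) ∂M.law x := by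
    unfold tk
    refine setLIntegral_congr_fun hA' (fun ω _ => ?_)
    rw [hG_def, lintegral_indicator (measurableSet_tset hst n)]
  rw [h1, ← markov_one x hA hG]
  have h2 : ∫⁻ ω in A, G (pshift ω) ∂M.law x =
      ∫⁻ ω in A, ({η : ℕ → X | ((n+1:ℕ):ℕ∞) < τ η}.indicator
        (fun η => f (η (n+1)))) ω ∂M.law x := by
    refine setLIntegral_congr_fun_ae hA' ?_
    refine Filter.Eventually.mono (hθ.2 x) (fun ω hω hmem => ?_)
    have h2le : 2 ≤ τ ω := (two_le_iff_one_lt (τ ω)).2 hmem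
    have hshift := hω h2le
    rw [hG_def]
    simp only [Set.indicator_apply, Set.mem_setOf_eq, hshift, sub_one_lt_iff h2le]
    rfl
  have hsub : {ω : ℕ → X | ((n+1:ℕ):ℕ∞) < τ ω} ⊆ A := by
    intro ω hω
    simp only [Set.mem_setOf_eq] at hω ⊢
    exact lt_of_le_of_lt (by exact_mod_cast (by omega : (1:ℕ) ≤ n + 1)) hω
  rw [h2, lintegral_indicator (measurableSet_tset hst (n+1)),
    Measure.restrict_restrict (measurableSet_tset hst (n+1)), Set.inter_eq_left.mpr hsub]
  rfl

/-- `T (q_m f) = q_{m+1} f` for `m ≥ 1`. -/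
lemma qk_step (hst : IsPathStoppingTime τ) (hθ : ThetaCompatible M τ)
    {f : X → ℝ≥0∞} (hf : Measurable f) (m : ℕ) (hm : 1 ≤ m) (x : X) :
    tk M τ 1 (qk M τ m f) x = qk M τ (m+1) f x := by
  set A : Set (ℕ → X) := {ω | ((1:ℕ):ℕ∞) < τ ω} with hA_def
  have hA : MeasurableSet[pathFiltration X 1] A := measurableSet_tset_filt hst 1
  have hA' : MeasurableSet A := measurableSet_tset hst 1
  set G : (ℕ → X) → ℝ≥0∞ := {η : ℕ → X | τ η = (m:ℕ∞)}.indicator (fun η => f (η m)) with hG_def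
  have hG : Measurable G :=
    (hf.comp (measurable_pi_apply m)).indicator (measurableSet_qset hst m)
  have h1 : tk M τ 1 (qk M τ m f) x = ∫⁻ ω in A, ∫⁻ η, G η ∂M.law (ω 1) ∂M.law x := by
    unfold tk
    refine setLIntegral_congr_fun hA' (fun ω _ => ?_)
    rw [hG_def, lintegral_indicator (measurableSet_qset hst m)]
    rfl
  rw [h1, ← markov_one x hA hG]
  have h2 : ∫⁻ ω in A, G (pshift ω) ∂M.law x =
      ∫⁻ ω in A, ({η : ℕ → X | τ η = ((m+1:ℕ):ℕ∞)}.indicator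
        (fun η => f (η (m+1)))) ω ∂M.law x := by
    refine setLIntegral_congr_fun_ae hA' ?_
    refine Filter.Eventually.mono (hθ.2 x) (fun ω hω hmem => ?_)
    have h2le : 2 ≤ τ ω := (two_le_iff_one_lt (τ ω)).2 hmem
    have hshift := hω h2le
    rw [hG_def]
    simp only [Set.indicator_apply, Set.mem_setOf_eq, hshift, sub_one_eq_iff h2le]
    rfl
  have hsub : {ω : ℕ → X | τ ω = ((m+1:ℕ):ℕ∞)} ⊆ A := by
    intro ω hω
    simp only [Set.mem_setOf_eq] at hω
    show ((1:ℕ):ℕ∞) < τ ω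
    rw [hω]
    exact_mod_cast (by omega : (1:ℕ) < m + 1)
  rw [h2, lintegral_indicator (measurableSet_qset hst (m+1)),
    Measure.restrict_restrict (measurableSet_qset hst (m+1)), Set.inter_eq_left.mpr hsub]
  rfl

end Stmt4Aux
namespace Stmt4Aux

variable {X : Type*} [MeasurableSpace X]
variable {M : MarkovChain X} {τ : (ℕ → X) → ℕ∞}

lemma measurable_Sop (hst : IsPathStoppingTime τ) {f : X → ℝ≥0∞} (hf : Measurable f) :
    Measurable (Sop M τ f) := by
  rw [Sop_eq_qk]
  exact measurable_qk M hst 1 hf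

/-- `T^n (T f) = T^{n+1} f`. -/
lemma tk_comp (hst : IsPathStoppingTime τ) (hθ : ThetaCompatible M τ)
    {f : X → ℝ≥0∞} (hf : Measurable f) (n : ℕ) (x : X) :
    tk M τ n (tk M τ 1 f) x = tk M τ (n+1) f x := by
  induction n generalizing x with
  | zero => exact tk_zero hθ (measurable_tk M hst 1 hf) x
  | succ n ih =>
    rw [← tk_step hst hθ (measurable_tk M hst 1 hf) n x]
    have : tk M τ n (tk M τ 1 f) = tk M τ (n+1) f := funext fun y => ih y
    rw [this]
    exact tk_step hst hθ hf (n+1) x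

/-- `q_{n+1} f = T^n (S f)`. -/
lemma qk_eq_tk_Sop (hst : IsPathStoppingTime τ) (hθ : ThetaCompatible M τ)
    {f : X → ℝ≥0∞} (hf : Measurable f) (n : ℕ) (x : X) :
    qk M τ (n+1) f x = tk M τ n (Sop M τ f) x := by
  induction n generalizing x with
  | zero => rw [tk_zero hθ (measurable_Sop hst hf) x, Sop_eq_qk]
  | succ n ih =>
    rw [← qk_step hst hθ hf (n+1) (by omega) x]
    have : qk M τ (n+1) f = tk M τ n (Sop M τ f) := funext fun y => ih y
    rw [this]
    exact tk_step hst hθ (measurable_Sop hst hf) n x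

/-- `Q f = ∑ T^n (S f)`. -/
lemma Qop_eq_tsum_tk (hst : IsPathStoppingTime τ) (hθ : ThetaCompatible M τ)
    {f : X → ℝ≥0∞} (hf : Measurable f) (x : X) :
    Qop M τ f x = ∑' n : ℕ, tk M τ n (Sop M τ f) x := by
  rw [Qop_eq_tsum hst hθ f x]
  exact tsum_congr fun n => qk_eq_tk_Sop hst hθ hf n x

/-- `R (S f) = Q f`. -/
lemma Rop_Sop (hst : IsPathStoppingTime τ) (hθ : ThetaCompatible M τ)
    (hτ : ∀ x, EtauE M τ x ≠ ⊤) {f : X → ℝ≥0∞} (hf : Measurable f) (x : X) :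
    Rop M τ (Sop M τ f) x = Qop M τ f x := by
  rw [Rop_eq_tsum hst hτ (measurable_Sop hst hf) x, Qop_eq_tsum_tk hst hθ hf x]

/-- `T` commutes with countable sums. -/
lemma tk_tsum (hst : IsPathStoppingTime τ) {g : ℕ → X → ℝ≥0∞}
    (hg : ∀ n, Measurable (g n)) (k : ℕ) (x : X) :
    tk M τ k (fun y => ∑' n, g n y) x = ∑' n, tk M τ k (g n) x := by
  unfold tk
  exact lintegral_tsum fun n => ((hg n).comp (measurable_pi_apply k)).aemeasurable

/-- `T` is additive. -/
lemma tk_add {g h : X → ℝ≥0∞} (hg : Measurable g) (k : ℕ) (x : X) :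
    tk M τ k (fun y => g y + h y) x = tk M τ k g x + tk M τ k h x := by
  unfold tk
  have hm : Measurable fun ω : ℕ → X => g (ω k) := hg.comp (measurable_pi_apply k)
  exact lintegral_add_left hm _

/-- `Q f = S f + T (Q f)`. -/
lemma Qop_one_step (hst : IsPathStoppingTime τ) (hθ : ThetaCompatible M τ)
    {f : X → ℝ≥0∞} (hf : Measurable f) (x : X) :
    Qop M τ f x = Sop M τ f x + tk M τ 1 (Qop M τ f) x := by
  have hSm := measurable_Sop (M := M) hst hf
  have hQ : Qop M τ f = fun y => ∑' n : ℕ, tk M τ n (Sop M τ f) y :=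
    funext fun y => Qop_eq_tsum_tk hst hθ hf y
  have hlast : tk M τ 1 (Qop M τ f) x = ∑' n : ℕ, tk M τ 1 (tk M τ n (Sop M τ f)) x := by
    rw [hQ]
    exact tk_tsum hst (fun n => measurable_tk M hst n hSm) 1 x
  calc Qop M τ f x = ∑' n : ℕ, tk M τ n (Sop M τ f) x := Qop_eq_tsum_tk hst hθ hf x
    _ = tk M τ 0 (Sop M τ f) x + ∑' n : ℕ, tk M τ (n+1) (Sop M τ f) x :=
        tsum_eq_zero_add' ENNReal.summable
    _ = Sop M τ f x + ∑' n : ℕ, tk M τ 1 (tk M τ n (Sop M τ f)) x := by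
        rw [tk_zero hθ hSm x]
        congr 1
        exact tsum_congr fun n => (tk_step hst hθ hSm n x).symm
    _ = Sop M τ f x + tk M τ 1 (Qop M τ f) x := by rw [hlast]

/-- `R (P f) + f = Q f + R f`. -/
lemma Rop_Pop (hst : IsPathStoppingTime τ) (hθ : ThetaCompatible M τ)
    (hτ : ∀ x, EtauE M τ x ≠ ⊤) {f : X → ℝ≥0∞} (hf : Measurable f) (x : X) :
    Rop M τ (Pop M f) x + f x = Qop M τ f x + Rop M τ f x := by
  have hSm := measurable_Sop (M := M) hst hf
  have hP : Pop M f = fun y => Sop M τ f y + tk M τ 1 f y :=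
    funext fun y => Pop_eq_add hst hθ f y
  have hPm : Measurable (Pop M f) := by
    rw [hP]; exact hSm.add (measurable_tk M hst 1 hf)
  have hsplit : ∀ n : ℕ, tk M τ n (Pop M f) x = tk M τ n (Sop M τ f) x + tk M τ (n+1) f x := by
    intro n
    rw [hP, tk_add hSm n x, tk_comp hst hθ hf n x]
  calc Rop M τ (Pop M f) x + f x
      = (∑' n : ℕ, tk M τ n (Pop M f) x) + f x := by rw [Rop_eq_tsum hst hτ hPm x]
    _ = (∑' n : ℕ, (tk M τ n (Sop M τ f) x + tk M τ (n+1) f x)) + f x := by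
        congr 1; exact tsum_congr hsplit
    _ = ((∑' n : ℕ, tk M τ n (Sop M τ f) x) + ∑' n : ℕ, tk M τ (n+1) f x) + f x := by
        rw [ENNReal.tsum_add]
    _ = Qop M τ f x + (f x + ∑' n : ℕ, tk M τ (n+1) f x) := by
        rw [Qop_eq_tsum_tk hst hθ hf x]; ring
    _ = Qop M τ f x + ∑' n : ℕ, tk M τ n f x := by
        congr 1
        rw [tsum_eq_zero_add' (f := fun n => tk M τ n f x) ENNReal.summable, tk_zero hθ hf x]
    _ = Qop M τ f x + Rop M τ f x := by rw [Rop_eq_tsum hst hτ hf x]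

/-- boundedness transfer -/
lemma tk_le (k : ℕ) {f : X → ℝ≥0∞} {C : ℝ≥0∞} (hfC : ∀ y, f y ≤ C) (x : X) :
    tk M τ k f x ≤ C := by
  haveI := M.prob x
  calc tk M τ k f x ≤ ∫⁻ _ in {ω : ℕ → X | (k:ℕ∞) < τ ω}, C ∂M.law x :=
        lintegral_mono fun ω => hfC _
    _ = C * M.law x {ω : ℕ → X | (k:ℕ∞) < τ ω} := setLIntegral_const _ _
    _ ≤ C * 1 := mul_le_mul_right prob_le_one _
    _ = C := mul_one C

lemma Sop_le {f : X → ℝ≥0∞} {C : ℝ≥0∞} (hfC : ∀ y, f y ≤ C) (x : X) :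
    Sop M τ f x ≤ C := by
  haveI := M.prob x
  calc Sop M τ f x ≤ ∫⁻ _ in {ω : ℕ → X | τ ω = 1}, C ∂M.law x :=
        lintegral_mono fun ω => hfC _
    _ = C * M.law x {ω : ℕ → X | τ ω = 1} := setLIntegral_const _ _
    _ ≤ C * 1 := mul_le_mul_right prob_le_one _
    _ = C := mul_one C

lemma Qop_le {f : X → ℝ≥0∞} {C : ℝ≥0∞} (hfC : ∀ y, f y ≤ C) (x : X) :
    Qop M τ f x ≤ C := by
  haveI := M.prob x
  calc Qop M τ f x ≤ ∫⁻ _ in {ω : ℕ → X | τ ω ≠ ⊤}, C ∂M.law x :=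
        lintegral_mono fun ω => hfC _
    _ = C * M.law x {ω : ℕ → X | τ ω ≠ ⊤} := setLIntegral_const _ _
    _ ≤ C * 1 := mul_le_mul_right prob_le_one _
    _ = C := mul_one C

lemma measurable_Qop (hst : IsPathStoppingTime τ) (hθ : ThetaCompatible M τ)
    {f : X → ℝ≥0∞} (hf : Measurable f) : Measurable (Qop M τ f) := by
  have : Qop M τ f = fun x => ∑' n : ℕ, tk M τ n (Sop M τ f) x :=
    funext fun x => Qop_eq_tsum_tk hst hθ hf x
  rw [this]
  exact Measurable.ennreal_tsum fun n => measurable_tk M hst n (measurable_Sop hst hf)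

lemma measurable_Rop (hst : IsPathStoppingTime τ) (hτ : ∀ x, EtauE M τ x ≠ ⊤)
    {f : X → ℝ≥0∞} (hf : Measurable f) : Measurable (Rop M τ f) := by
  have : Rop M τ f = fun x => ∑' k : ℕ, tk M τ k f x :=
    funext fun x => Rop_eq_tsum hst hτ hf x
  rw [this]
  exact Measurable.ennreal_tsum fun k => measurable_tk M hst k hf

end Stmt4Aux
namespace Stmt4Aux

variable {X : Type*} [MeasurableSpace X]

/-- the measure `S*μ` -/
def smeas (M : MarkovChain X) (τ : (ℕ → X) → ℕ∞) (μ : Measure X) : Measure X :=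
  μ.bind fun x => ((M.law x).restrict {ω | τ ω = 1}).map (fun ω => ω 1)

/-- the measure `R*ν` -/
def rmeas (M : MarkovChain X) (τ : (ℕ → X) → ℕ∞) (ν : Measure X) : Measure X :=
  Measure.sum fun k : ℕ =>
    ν.bind fun x => ((M.law x).restrict {ω | (k : ℕ∞) < τ ω}).map (fun ω => ω k)

variable {M : MarkovChain X} {τ : (ℕ → X) → ℕ∞}

lemma measurableSet_S (hst : IsPathStoppingTime τ) :
    MeasurableSet {ω : ℕ → X | τ ω = (1:ℕ∞)} := by
  have h : ({ω : ℕ → X | τ ω = (1:ℕ∞)}) = {ω : ℕ → X | τ ω = ((1:ℕ):ℕ∞)} := by norm_num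
  rw [h]
  exact measurableSet_qset hst 1

lemma measurable_sker (hst : IsPathStoppingTime τ) :
    Measurable fun x => ((M.law x).restrict {ω : ℕ → X | τ ω = 1}).map (fun ω => ω 1) := by
  refine Measure.measurable_of_measurable_coe _ (fun A hA => ?_)
  have hc : Measurable fun ω : ℕ → X => ω 1 := measurable_pi_apply 1
  have hpre : MeasurableSet ((fun ω : ℕ → X => ω 1) ⁻¹' A) := hc hA
  simp_rw [Measure.map_apply hc hA, Measure.restrict_apply hpre]
  exact (Measure.measurable_coe (hpre.inter (measurableSet_S hst))).comp M.meas_law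

lemma measurable_rker (hst : IsPathStoppingTime τ) (k : ℕ) :
    Measurable fun x =>
      ((M.law x).restrict {ω : ℕ → X | (k : ℕ∞) < τ ω}).map (fun ω => ω k) := by
  refine Measure.measurable_of_measurable_coe _ (fun A hA => ?_)
  have hc : Measurable fun ω : ℕ → X => ω k := measurable_pi_apply k
  have hpre : MeasurableSet ((fun ω : ℕ → X => ω k) ⁻¹' A) := hc hA
  simp_rw [Measure.map_apply hc hA, Measure.restrict_apply hpre]
  exact (Measure.measurable_coe (hpre.inter (measurableSet_tset hst k))).comp M.meas_law

lemma lintegral_smeas (hst : IsPathStoppingTime τ) (μ : Measure X) {f : X → ℝ≥0∞}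
    (hf : Measurable f) :
    ∫⁻ y, f y ∂(smeas M τ μ) = ∫⁻ x, Sop M τ f x ∂μ := by
  rw [smeas, Measure.lintegral_bind (measurable_sker hst).aemeasurable hf.aemeasurable]
  congr 1
  funext x
  rw [lintegral_map hf (measurable_pi_apply 1)]
  rfl

lemma lintegral_rmeas (hst : IsPathStoppingTime τ) (hτ : ∀ x, EtauE M τ x ≠ ⊤)
    (ν : Measure X) {f : X → ℝ≥0∞} (hf : Measurable f) :
    ∫⁻ y, f y ∂(rmeas M τ ν) = ∫⁻ x, Rop M τ f x ∂ν := by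
  rw [rmeas, lintegral_sum_measure]
  have hterm : ∀ k : ℕ,
      (∫⁻ y, f y ∂(ν.bind fun x =>
        ((M.law x).restrict {ω : ℕ → X | (k : ℕ∞) < τ ω}).map (fun ω => ω k))) =
      ∫⁻ x, tk M τ k f x ∂ν := by
    intro k
    rw [Measure.lintegral_bind (measurable_rker hst k).aemeasurable hf.aemeasurable]
    congr 1
    funext x
    rw [lintegral_map hf (measurable_pi_apply k)]
    rfl
  rw [tsum_congr hterm, ← lintegral_tsum (fun k => (measurable_tk M hst k hf).aemeasurable)]
  exact lintegral_congr fun x => (Rop_eq_tsum hst hτ hf x).symm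

lemma smeas_apply (hst : IsPathStoppingTime τ) (μ : Measure X) {A : Set X}
    (hA : MeasurableSet A) :
    smeas M τ μ A = ∫⁻ x, Sop M τ (A.indicator 1) x ∂μ := by
  rw [← lintegral_indicator_one hA, lintegral_smeas hst μ (measurable_one.indicator hA)]

lemma rmeas_apply (hst : IsPathStoppingTime τ) (hτ : ∀ x, EtauE M τ x ≠ ⊤) (ν : Measure X)
    {A : Set X} (hA : MeasurableSet A) :
    rmeas M τ ν A = ∫⁻ x, Rop M τ (A.indicator 1) x ∂ν := by
  rw [← lintegral_indicator_one hA, lintegral_rmeas hst hτ ν (measurable_one.indicator hA)]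

lemma sstarEq_smeas (hst : IsPathStoppingTime τ) (μ : Measure X) :
    SstarEq M τ μ (smeas M τ μ) := fun A hA => smeas_apply hst μ hA

lemma rstarEq_rmeas (hst : IsPathStoppingTime τ) (hτ : ∀ x, EtauE M τ x ≠ ⊤) (ν : Measure X) :
    RstarEq M τ ν (rmeas M τ ν) := fun A hA => rmeas_apply hst hτ ν hA

lemma sstarEq_unique (hst : IsPathStoppingTime τ) {μ ν : Measure X}
    (h : SstarEq M τ μ ν) : ν = smeas M τ μ :=
  Measure.ext fun A hA => by rw [h A hA, smeas_apply hst μ hA]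

lemma rstarEq_unique (hst : IsPathStoppingTime τ) (hτ : ∀ x, EtauE M τ x ≠ ⊤)
    {ν m : Measure X} (h : RstarEq M τ ν m) : m = rmeas M τ ν :=
  Measure.ext fun A hA => by rw [h A hA, rmeas_apply hst hτ ν hA]

lemma smeas_lin (hst : IsPathStoppingTime τ) (c t : ℝ≥0∞) (m₁ m₂ : Measure X) :
    smeas M τ (c • (t • m₁ + (1 - t) • m₂)) =
      c • (t • smeas M τ m₁ + (1 - t) • smeas M τ m₂) := by
  refine Measure.ext fun A hA => ?_
  simp only [smeas_apply hst _ hA, Measure.smul_apply, Measure.add_apply, smul_eq_mul,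
    lintegral_smul_measure, lintegral_add_measure]

lemma rmeas_lin (hst : IsPathStoppingTime τ) (hτ : ∀ x, EtauE M τ x ≠ ⊤)
    (c t : ℝ≥0∞) (m₁ m₂ : Measure X) :
    rmeas M τ (c • (t • m₁ + (1 - t) • m₂)) =
      c • (t • rmeas M τ m₁ + (1 - t) • rmeas M τ m₂) := by
  refine Measure.ext fun A hA => ?_
  simp only [rmeas_apply hst hτ _ hA, Measure.smul_apply, Measure.add_apply, smul_eq_mul,
    lintegral_smul_measure, lintegral_add_measure]

lemma smeas_smul (hst : IsPathStoppingTime τ) (c : ℝ≥0∞) (m : Measure X) :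
    smeas M τ (c • m) = c • smeas M τ m := by
  refine Measure.ext fun A hA => ?_
  simp only [smeas_apply hst _ hA, Measure.smul_apply, smul_eq_mul, lintegral_smul_measure]

lemma rmeas_smul (hst : IsPathStoppingTime τ) (hτ : ∀ x, EtauE M τ x ≠ ⊤)
    (c : ℝ≥0∞) (m : Measure X) :
    rmeas M τ (c • m) = c • rmeas M τ m := by
  refine Measure.ext fun A hA => ?_
  simp only [rmeas_apply hst hτ _ hA, Measure.smul_apply, smul_eq_mul, lintegral_smul_measure]

lemma smeas_zero (hst : IsPathStoppingTime τ) : smeas M τ (0 : Measure X) = 0 :=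
  Measure.ext fun A hA => by rw [smeas_apply hst _ hA, lintegral_zero_measure]; simp

lemma rmeas_zero (hst : IsPathStoppingTime τ) (hτ : ∀ x, EtauE M τ x ≠ ⊤) :
    rmeas M τ (0 : Measure X) = 0 :=
  Measure.ext fun A hA => by rw [rmeas_apply hst hτ _ hA, lintegral_zero_measure]; simp

end Stmt4Aux
namespace Stmt4Aux

variable {X : Type*} [MeasurableSpace X]
variable {M : MarkovChain X} {τ : (ℕ → X) → ℕ∞}

lemma measurable_Pop {f : X → ℝ≥0∞} (hf : Measurable f) : Measurable (Pop M f) :=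
  (Measure.measurable_lintegral (hf.comp (measurable_pi_apply 1))).comp M.meas_law

lemma Sop_tsum {g : ℕ → X → ℝ≥0∞} (hg : ∀ n, Measurable (g n)) (x : X) :
    Sop M τ (fun y => ∑' n, g n y) x = ∑' n, Sop M τ (g n) x := by
  unfold Sop
  exact lintegral_tsum fun n => ((hg n).comp (measurable_pi_apply 1)).aemeasurable

lemma Qop_mono {f g : X → ℝ≥0∞} (h : ∀ y, f y ≤ g y) (x : X) :
    Qop M τ f x ≤ Qop M τ g x :=
  lintegral_mono fun ω => h _

lemma indicator_le_one (A : Set X) (y : X) : A.indicator (1 : X → ℝ≥0∞) y ≤ 1 := by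
  by_cases hy : y ∈ A <;> simp [hy]

lemma ennreal_iSup_min (a : ℝ≥0∞) : ⨆ N : ℕ, min a (N : ℝ≥0∞) = a := by
  have h1 : (⨆ N : ℕ, min a (N:ℝ≥0∞)) = a ⊓ ⨆ N : ℕ, (N:ℝ≥0∞) := (inf_iSup_eq _ _).symm
  rw [h1, ENNReal.iSup_natCast]
  simp

/-- the key adjoint relation coming from `P`-invariance: `∫ Sh dμ + ∫ Th dμ = ∫ h dμ`. -/
lemma Ekey (hst : IsPathStoppingTime τ) (hθ : ThetaCompatible M τ) {μ : Measure X}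
    (hμ : PInvariant M μ) {h : X → ℝ≥0∞} (hm : Measurable h)
    (hbd : ∃ C : ℝ≥0∞, C ≠ ⊤ ∧ ∀ y, h y ≤ C) :
    ∫⁻ x, Sop M τ h x ∂μ + ∫⁻ x, tk M τ 1 h x ∂μ = ∫⁻ x, h x ∂μ := by
  have hp := hμ h hm hbd
  calc ∫⁻ x, Sop M τ h x ∂μ + ∫⁻ x, tk M τ 1 h x ∂μ
      = ∫⁻ x, (Sop M τ h x + tk M τ 1 h x) ∂μ :=
        (lintegral_add_left (measurable_Sop hst hm) _).symm
    _ = ∫⁻ x, Pop M h x ∂μ := lintegral_congr fun x => (Pop_eq_add hst hθ h x).symm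
    _ = ∫⁻ x, h x ∂μ := hp

/-- Part 1: from `P`-invariant to `Q`-invariant. -/
lemma main_PtoQ (hst : IsPathStoppingTime τ) (hθ : ThetaCompatible M τ)
    (hτ : ∀ x, EtauE M τ x ≠ ⊤) {μ : Measure X} [IsFiniteMeasure μ]
    (hμ : PInvariant M μ) :
    IsFiniteMeasure (smeas M τ μ) ∧ QInvariant M τ (smeas M τ μ) ∧
      RstarEq M τ (smeas M τ μ) μ := by
  refine ⟨?_, ?_, ?_⟩
  · -- finiteness
    constructor
    rw [smeas_apply hst μ MeasurableSet.univ]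
    calc ∫⁻ x, Sop M τ (Set.univ.indicator 1) x ∂μ
        ≤ ∫⁻ _, 1 ∂μ :=
          lintegral_mono fun x => Sop_le (fun y => indicator_le_one _ y) x
      _ = μ Set.univ := lintegral_one
      _ < ⊤ := measure_lt_top μ _
  · -- Q-invariance
    intro g hg hbd
    obtain ⟨C, hC, hgC⟩ := hbd
    have hQg : Measurable (Qop M τ g) := measurable_Qop hst hθ hg
    have hQgC : ∀ y, Qop M τ g y ≤ C := fun y => Qop_le hgC y
    have e1 := Ekey hst hθ hμ hQg ⟨C, hC, hQgC⟩
    have e2 : ∫⁻ x, Qop M τ g x ∂μ =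
        ∫⁻ x, Sop M τ g x ∂μ + ∫⁻ x, tk M τ 1 (Qop M τ g) x ∂μ := by
      calc ∫⁻ x, Qop M τ g x ∂μ
          = ∫⁻ x, (Sop M τ g x + tk M τ 1 (Qop M τ g) x) ∂μ :=
            lintegral_congr fun x => Qop_one_step hst hθ hg x
        _ = _ := lintegral_add_left (measurable_Sop hst hg) _
    have hfin : ∫⁻ x, tk M τ 1 (Qop M τ g) x ∂μ ≠ ⊤ := by
      refine ne_of_lt (lt_of_le_of_lt (lintegral_mono fun x => tk_le 1 hQgC x) ?_)
      rw [lintegral_const]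
      exact ENNReal.mul_lt_top hC.lt_top (measure_lt_top μ _)
    have hcancel : ∫⁻ x, Sop M τ (Qop M τ g) x ∂μ = ∫⁻ x, Sop M τ g x ∂μ :=
      WithTop.add_right_cancel hfin (e1.trans e2)
    rw [lintegral_smeas hst μ hQg, lintegral_smeas hst μ hg]
    exact hcancel
  · -- RstarEq
    intro A hA
    set f : X → ℝ≥0∞ := A.indicator 1 with hf_def
    have hfm : Measurable f := measurable_one.indicator hA
    have hfle : ∀ y, f y ≤ 1 := fun y => indicator_le_one A y
    set a : ℕ → ℝ≥0∞ := fun n => ∫⁻ x, tk M τ n f x ∂μ with ha_def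
    set b : ℕ → ℝ≥0∞ := fun n => ∫⁻ x, Sop M τ (tk M τ n f) x ∂μ with hb_def
    have hstep : ∀ n, b n + a (n+1) = a n := by
      intro n
      have h1 : a (n+1) = ∫⁻ x, tk M τ 1 (tk M τ n f) x ∂μ :=
        lintegral_congr fun x => (tk_step hst hθ hfm n x).symm
      rw [hb_def, h1]
      exact Ekey hst hθ hμ (measurable_tk M hst n hfm)
        ⟨1, ENNReal.one_ne_top, fun y => tk_le n hfle y⟩
    have hpartial : ∀ N, (∑ n ∈ Finset.range N, b n) + a N = a 0 := by
      intro N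
      induction N with
      | zero => simp
      | succ N ih =>
        rw [Finset.sum_range_succ, add_assoc, hstep N, ih]
    set g : ℕ → X → ℝ≥0∞ := fun n x => M.law x {ω : ℕ → X | (n:ℕ∞) < τ ω} with hg_def
    have hgm : ∀ n, Measurable (g n) :=
      fun n => (Measure.measurable_coe (measurableSet_tset hst n)).comp M.meas_law
    have hgle : ∀ n x, g n x ≤ 1 := by
      intro n x
      haveI := M.prob x
      exact prob_le_one
    have ha_le : ∀ n, a n ≤ ∫⁻ x, g n x ∂μ := by
      intro n
      refine lintegral_mono fun x => ?_
      calc tk M τ n f x ≤ ∫⁻ _ in {ω : ℕ → X | (n:ℕ∞) < τ ω}, 1 ∂M.law x :=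
            lintegral_mono fun ω => hfle _
        _ = g n x := setLIntegral_one _
    have hganti : Antitone g := by
      intro m n hmn
      intro x
      refine measure_mono fun ω hω => ?_
      simp only [Set.mem_setOf_eq] at hω ⊢
      exact lt_of_le_of_lt (by exact_mod_cast hmn) hω
    have hg0fin : ∫⁻ x, g 0 x ∂μ ≠ ⊤ := by
      refine ne_of_lt (lt_of_le_of_lt (lintegral_mono fun x => hgle 0 x) ?_)
      rw [lintegral_one]
      exact measure_lt_top μ _
    have hginf : ∀ x, ⨅ n, g n x = 0 := by
      intro x
      have hiInter : (⋂ n : ℕ, {ω : ℕ → X | (n:ℕ∞) < τ ω}) = {ω : ℕ → X | τ ω = ⊤} := by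
        ext ω
        simp only [Set.mem_iInter, Set.mem_setOf_eq]
        constructor
        · intro hall
          by_contra hne
          cases hτω : τ ω using ENat.recTopCoe with
          | top => exact hne hτω
          | coe m =>
            have := hall m
            rw [hτω] at this
            exact absurd this (by exact_mod_cast lt_irrefl m)
        · intro htop n
          rw [htop]
          exact ENat.coe_lt_top n
      have hsetanti : Antitone (fun n : ℕ => {ω : ℕ → X | (n:ℕ∞) < τ ω}) := by
        intro m n hmn ω hω
        simp only [Set.mem_setOf_eq] at hω ⊢
        exact lt_of_le_of_lt (by exact_mod_cast hmn) hω
      haveI := M.prob x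
      have hmes := Directed.measure_iInter
        (μ := M.law x) (s := fun n : ℕ => {ω : ℕ → X | (n:ℕ∞) < τ ω})
        (fun n => (measurableSet_tset hst n).nullMeasurableSet)
        hsetanti.directed_ge
        ⟨0, (measure_lt_top _ _).ne⟩
      rw [hiInter, tau_top_null hst hτ x] at hmes
      exact hmes.symm
    have hinf0 : ⨅ n, ∫⁻ x, g n x ∂μ = 0 := by
      rw [← lintegral_iInf hgm hganti hg0fin]
      simp_rw [hginf]
      exact lintegral_zero
    have htsum : ∑' n, b n = a 0 := by
      apply le_antisymm
      · rw [ENNReal.tsum_eq_iSup_nat]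
        refine iSup_le fun N => ?_
        rw [← hpartial N]
        exact le_self_add
      · calc a 0 ≤ ⨅ N : ℕ, ((∑' n, b n) + ∫⁻ x, g N x ∂μ) := by
              refine le_iInf fun N => ?_
              rw [← hpartial N]
              exact add_le_add (ENNReal.sum_le_tsum _) (ha_le N)
          _ = (∑' n, b n) + ⨅ N : ℕ, ∫⁻ x, g N x ∂μ := ENNReal.add_iInf.symm
          _ = ∑' n, b n := by rw [hinf0, add_zero]
    have ha0 : a 0 = μ A := by
      have h0 : a 0 = ∫⁻ x, f x ∂μ := lintegral_congr fun x => tk_zero hθ hfm x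
      rw [h0, hf_def, lintegral_indicator_one hA]
    have hRf : ∫⁻ x, Rop M τ f x ∂(smeas M τ μ) = ∑' n, b n := by
      rw [lintegral_smeas hst μ (measurable_Rop hst hτ hfm)]
      have h1 : ∀ x, Sop M τ (Rop M τ f) x = ∑' n, Sop M τ (tk M τ n f) x := by
        intro x
        have hR : Rop M τ f = fun y => ∑' n, tk M τ n f y :=
          funext fun y => Rop_eq_tsum hst hτ hfm y
        rw [hR, Sop_tsum (fun n => measurable_tk M hst n hfm) x]
      rw [lintegral_congr h1]
      exact lintegral_tsum fun n =>
        (measurable_Sop hst (measurable_tk M hst n hfm)).aemeasurable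
    rw [hRf, htsum, ha0]

end Stmt4Aux
namespace Stmt4Aux

variable {X : Type*} [MeasurableSpace X]
variable {M : MarkovChain X} {τ : (ℕ → X) → ℕ∞}

/-- Part 2: from `Q`-invariant to `P`-invariant. -/
lemma main_QtoP (hst : IsPathStoppingTime τ) (hθ : ThetaCompatible M τ)
    (hτ : ∀ x, EtauE M τ x ≠ ⊤)
    (hQR : ∃ C : ℝ≥0, ∀ x, Qop M τ (Rop M τ 1) x ≤ (C : ℝ≥0∞))
    {ν : Measure X} [IsFiniteMeasure ν] (hν : QInvariant M τ ν) :
    IsFiniteMeasure (rmeas M τ ν) ∧ PInvariant M (rmeas M τ ν) ∧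
      SstarEq M τ (rmeas M τ ν) ν := by
  have hR1m : Measurable (Rop M τ (1 : X → ℝ≥0∞)) := measurable_Rop hst hτ measurable_one
  refine ⟨?_, ?_, ?_⟩
  · -- finiteness, via `QR1` bounded
    obtain ⟨C, hC⟩ := hQR
    constructor
    rw [rmeas_apply hst hτ ν MeasurableSet.univ]
    have huniv : ∀ x, Rop M τ (Set.univ.indicator 1) x = Rop M τ (1 : X → ℝ≥0∞) x := by
      intro x
      congr 1
      simp
    rw [lintegral_congr huniv]
    have hmin : ∀ x, Rop M τ (1 : X → ℝ≥0∞) x =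
        ⨆ N : ℕ, min (Rop M τ (1 : X → ℝ≥0∞) x) (N : ℝ≥0∞) :=
      fun x => (ennreal_iSup_min _).symm
    rw [lintegral_congr hmin,
      lintegral_iSup (fun N => hR1m.min measurable_const)
        (fun N₁ N₂ h x => min_le_min (le_refl _) (by exact_mod_cast h))]
    refine lt_of_le_of_lt (iSup_le fun N => ?_)
      (show (C : ℝ≥0∞) * ν Set.univ < ⊤ from
        ENNReal.mul_lt_top ENNReal.coe_lt_top (measure_lt_top ν _))
    have hq := hν (fun x => min (Rop M τ (1 : X → ℝ≥0∞) x) (N : ℝ≥0∞))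
      (hR1m.min measurable_const)
      ⟨(N : ℝ≥0∞), ENNReal.natCast_ne_top N, fun y => min_le_right _ _⟩
    rw [← hq]
    calc ∫⁻ x, Qop M τ (fun y => min (Rop M τ 1 y) (N : ℝ≥0∞)) x ∂ν
        ≤ ∫⁻ x, Qop M τ (Rop M τ 1) x ∂ν :=
          lintegral_mono fun x => Qop_mono (fun y => min_le_left _ _) x
      _ ≤ ∫⁻ _, (C : ℝ≥0∞) ∂ν := lintegral_mono fun x => hC x
      _ = (C : ℝ≥0∞) * ν Set.univ := lintegral_const _
  · -- P-invariance
    intro f hf hbd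
    obtain ⟨C, hC, hfC⟩ := hbd
    have hPm : Measurable (Pop M f) := measurable_Pop hf
    have e : ∫⁻ x, Rop M τ (Pop M f) x ∂ν + ∫⁻ x, f x ∂ν =
        ∫⁻ x, Qop M τ f x ∂ν + ∫⁻ x, Rop M τ f x ∂ν := by
      calc ∫⁻ x, Rop M τ (Pop M f) x ∂ν + ∫⁻ x, f x ∂ν
          = ∫⁻ x, (Rop M τ (Pop M f) x + f x) ∂ν :=
            (lintegral_add_left (measurable_Rop hst hτ hPm) _).symm
        _ = ∫⁻ x, (Qop M τ f x + Rop M τ f x) ∂ν :=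
            lintegral_congr fun x => Rop_Pop hst hθ hτ hf x
        _ = _ := lintegral_add_left (measurable_Qop hst hθ hf) _
    rw [hν f hf ⟨C, hC, hfC⟩] at e
    have hfin : ∫⁻ x, f x ∂ν ≠ ⊤ := by
      refine ne_of_lt (lt_of_le_of_lt (lintegral_mono hfC) ?_)
      rw [lintegral_const]
      exact ENNReal.mul_lt_top hC.lt_top (measure_lt_top ν _)
    have hcancel : ∫⁻ x, Rop M τ (Pop M f) x ∂ν = ∫⁻ x, Rop M τ f x ∂ν := by
      refine (ENNReal.add_left_inj hfin).mp ?_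
      rw [e, add_comm]
    rw [lintegral_rmeas hst hτ ν hPm, lintegral_rmeas hst hτ ν hf]
    exact hcancel
  · -- SstarEq
    intro A hA
    set f : X → ℝ≥0∞ := A.indicator 1 with hf_def
    have hfm : Measurable f := measurable_one.indicator hA
    rw [lintegral_rmeas hst hτ ν (measurable_Sop hst hfm)]
    have h1 : ∫⁻ x, Rop M τ (Sop M τ f) x ∂ν = ∫⁻ x, Qop M τ f x ∂ν :=
      lintegral_congr fun x => Rop_Sop hst hθ hτ hfm x
    rw [h1, hν f hfm ⟨1, ENNReal.one_ne_top, fun y => indicator_le_one A y⟩, hf_def,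
      lintegral_indicator_one hA]

end Stmt4Aux
namespace Stmt4Aux

variable {X : Type*} [MeasurableSpace X]

/-- abstract transfer of ergodicity through a pair of reciprocal linear maps -/
lemma ergodic_transfer {Inv₁ Inv₂ : Measure X → Prop} {F G : Measure X → Measure X}
    (hG_lin : ∀ (c t : ℝ≥0∞) (m₁ m₂ : Measure X),
      G (c • (t • m₁ + (1 - t) • m₂)) = c • (t • G m₁ + (1 - t) • G m₂))
    (hF_smul : ∀ (c : ℝ≥0∞) (m : Measure X), F (c • m) = c • F m)
    (hF0 : F 0 = 0) (hG0 : G 0 = 0)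
    (hFG : ∀ m : Measure X, Inv₁ m → IsFiniteMeasure m →
      Inv₂ (F m) ∧ IsFiniteMeasure (F m) ∧ G (F m) = m)
    (hGF : ∀ m : Measure X, Inv₂ m → IsFiniteMeasure m →
      Inv₁ (G m) ∧ IsFiniteMeasure (G m) ∧ F (G m) = m)
    (hInv₁_smul : ∀ (c : ℝ≥0∞) (m : Measure X), Inv₁ m → Inv₁ (c • m))
    (μ : Measure X) (hfin : IsFiniteMeasure μ) (hinv : Inv₁ μ)
    (herg : ErgodicAmong Inv₁ μ) :
    ErgodicAmong Inv₂ (F μ) := by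
  obtain ⟨hμ0, hkey⟩ := herg
  obtain ⟨hFμi, hFμf, hGFμ⟩ := hFG μ hinv hfin
  constructor
  · intro h0
    exact hμ0 (by rw [← hGFμ, h0, hG0])
  · intro ν₁ ν₂ t hν₁ hν₂ hp₁ hp₂ ht0 ht1 heq
    haveI := hp₁; haveI := hp₂
    obtain ⟨hGν₁i, hGν₁f, hFGν₁⟩ := hGF ν₁ hν₁ inferInstance
    obtain ⟨hGν₂i, hGν₂f, hFGν₂⟩ := hGF ν₂ hν₂ inferInstance
    haveI := hGν₁f; haveI := hGν₂f; haveI := hFμf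
    set κ := F μ Set.univ with hκ_def
    set c₁ := G ν₁ Set.univ with hc₁_def
    set c₂ := G ν₂ Set.univ with hc₂_def
    have hc₁0 : c₁ ≠ 0 := by
      intro h
      have h1 : G ν₁ = 0 := Measure.measure_univ_eq_zero.mp h
      have h2 : ν₁ = 0 := by rw [← hFGν₁, h1, hF0]
      exact IsProbabilityMeasure.ne_zero ν₁ h2
    have hc₂0 : c₂ ≠ 0 := by
      intro h
      have h1 : G ν₂ = 0 := Measure.measure_univ_eq_zero.mp h
      have h2 : ν₂ = 0 := by rw [← hFGν₂, h1, hF0]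
      exact IsProbabilityMeasure.ne_zero ν₂ h2
    have hc₁t : c₁ ≠ ⊤ := (measure_lt_top _ _).ne
    have hc₂t : c₂ ≠ ⊤ := (measure_lt_top _ _).ne
    have hκ0 : κ ≠ 0 := by
      intro h
      have h1 : F μ = 0 := Measure.measure_univ_eq_zero.mp h
      exact hμ0 (by rw [← hGFμ, h1, hG0])
    have hκt : κ ≠ ⊤ := (measure_lt_top _ _).ne
    have htt : t ≠ ⊤ := (ht1.trans ENNReal.one_lt_top).ne
    have h1t0 : 1 - t ≠ 0 := by
      rw [ne_eq, tsub_eq_zero_iff_le]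
      exact not_le.mpr ht1
    have h1tt : 1 - t ≠ ⊤ := ne_top_of_le_ne_top ENNReal.one_ne_top tsub_le_self
    have hμdec : μ = κ • (t • G ν₁ + (1 - t) • G ν₂) := by
      rw [← hGFμ, heq, hG_lin]
    set A := t * c₁ with hA_def
    set B := (1 - t) * c₂ with hB_def
    set D := A + B with hD_def
    have hA0 : A ≠ 0 := mul_ne_zero ht0.ne' hc₁0
    have hAt : A ≠ ⊤ := ENNReal.mul_ne_top htt hc₁t
    have hB0 : B ≠ 0 := mul_ne_zero h1t0 hc₂0
    have hBt : B ≠ ⊤ := ENNReal.mul_ne_top h1tt hc₂t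
    have hD0 : D ≠ 0 := fun h => hA0 (add_eq_zero.mp h).1
    have hDt : D ≠ ⊤ := ENNReal.add_ne_top.mpr ⟨hAt, hBt⟩
    have hmass : μ Set.univ = κ * D := by
      rw [hμdec]
      simp only [Measure.smul_apply, Measure.add_apply, smul_eq_mul, hD_def, hA_def, hB_def,
        ← hc₁_def, ← hc₂_def]
    set t' := A / D with ht'_def
    have ht'0 : 0 < t' := ENNReal.div_pos hA0 hDt
    have ht'1 : t' < 1 := by
      rw [ht'_def, ENNReal.div_lt_iff (Or.inl hD0) (Or.inl hDt), one_mul]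
      exact ENNReal.lt_add_right hAt hB0
    have h1t' : 1 - t' = B / D := by
      have hsum : B / D + A / D = 1 := by
        rw [ENNReal.div_add_div_same, add_comm B A, ← hD_def, ENNReal.div_self hD0 hDt]
      exact ENNReal.sub_eq_of_eq_add (ENNReal.div_lt_top hAt hD0).ne hsum.symm
    set μ₁ : Measure X := c₁⁻¹ • G ν₁ with hμ₁_def
    set μ₂ : Measure X := c₂⁻¹ • G ν₂ with hμ₂_def
    have hp₁' : IsProbabilityMeasure μ₁ := by
      constructor
      rw [hμ₁_def, Measure.smul_apply, smul_eq_mul, ← hc₁_def]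
      exact ENNReal.inv_mul_cancel hc₁0 hc₁t
    have hp₂' : IsProbabilityMeasure μ₂ := by
      constructor
      rw [hμ₂_def, Measure.smul_apply, smul_eq_mul, ← hc₂_def]
      exact ENNReal.inv_mul_cancel hc₂0 hc₂t
    have hco₁ : μ Set.univ * (t' * c₁⁻¹) = κ * t := by
      calc μ Set.univ * (t' * c₁⁻¹) = κ * (D * (A / D)) * c₁⁻¹ := by rw [hmass]; ring
        _ = κ * A * c₁⁻¹ := by rw [ENNReal.mul_div_cancel hD0 hDt]
        _ = κ * t * (c₁ * c₁⁻¹) := by rw [hA_def]; ring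
        _ = κ * t := by rw [ENNReal.mul_inv_cancel hc₁0 hc₁t, mul_one]
    have hco₂ : μ Set.univ * ((1 - t') * c₂⁻¹) = κ * (1 - t) := by
      calc μ Set.univ * ((1 - t') * c₂⁻¹) = κ * (D * (B / D)) * c₂⁻¹ := by
            rw [hmass, h1t']; ring
        _ = κ * B * c₂⁻¹ := by rw [ENNReal.mul_div_cancel hD0 hDt]
        _ = κ * (1 - t) * (c₂ * c₂⁻¹) := by rw [hB_def]; ring
        _ = κ * (1 - t) := by rw [ENNReal.mul_inv_cancel hc₂0 hc₂t, mul_one]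
    have hμdec' : μ = μ Set.univ • (t' • μ₁ + (1 - t') • μ₂) := by
      refine Measure.ext fun s hs => ?_
      have e₁ : μ Set.univ * (t' * (c₁⁻¹ * G ν₁ s)) = κ * (t * G ν₁ s) := by
        calc μ Set.univ * (t' * (c₁⁻¹ * G ν₁ s))
            = (μ Set.univ * (t' * c₁⁻¹)) * G ν₁ s := by ring
          _ = (κ * t) * G ν₁ s := by rw [hco₁]
          _ = κ * (t * G ν₁ s) := by ring
      have e₂ : μ Set.univ * ((1 - t') * (c₂⁻¹ * G ν₂ s)) = κ * ((1 - t) * G ν₂ s) := by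
        calc μ Set.univ * ((1 - t') * (c₂⁻¹ * G ν₂ s))
            = (μ Set.univ * ((1 - t') * c₂⁻¹)) * G ν₂ s := by ring
          _ = (κ * (1 - t)) * G ν₂ s := by rw [hco₂]
          _ = κ * ((1 - t) * G ν₂ s) := by ring
      conv_lhs => rw [hμdec]
      simp only [hμ₁_def, hμ₂_def, Measure.smul_apply, Measure.add_apply, smul_eq_mul]
      rw [mul_add κ, mul_add (μ Set.univ), e₁, e₂]
    have hmain := hkey μ₁ μ₂ t' (hInv₁_smul _ _ hGν₁i) (hInv₁_smul _ _ hGν₂i) hp₁' hp₂'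
      ht'0 ht'1 hμdec'
    have hsc : c₁⁻¹ • ν₁ = c₂⁻¹ • ν₂ := by
      have h1 : F μ₁ = c₁⁻¹ • ν₁ := by rw [hμ₁_def, hF_smul, hFGν₁]
      have h2 : F μ₂ = c₂⁻¹ • ν₂ := by rw [hμ₂_def, hF_smul, hFGν₂]
      rw [← h1, ← h2, hmain]
    have hcc : c₁ = c₂ := by
      have := congrArg (fun m : Measure X => m Set.univ) hsc
      simp only [Measure.smul_apply, smul_eq_mul, measure_univ, mul_one] at this
      rw [← inv_inv c₁, this, inv_inv]
    calc ν₁ = c₁ • (c₁⁻¹ • ν₁) := by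
          rw [smul_smul, ENNReal.mul_inv_cancel hc₁0 hc₁t, one_smul]
      _ = c₂ • (c₂⁻¹ • ν₂) := by rw [hsc, hcc]
      _ = ν₂ := by rw [smul_smul, ENNReal.mul_inv_cancel hc₂0 hc₂t, one_smul]

end Stmt4Aux
namespace Stmt4Aux

variable {X : Type*} [MeasurableSpace X]
variable {M : MarkovChain X} {τ : (ℕ → X) → ℕ∞}

lemma pinv_smul (c : ℝ≥0∞) {μ : Measure X} (hμ : PInvariant M μ) : PInvariant M (c • μ) := by
  intro f hf hbd
  rw [lintegral_smul_measure, lintegral_smul_measure, hμ f hf hbd]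

lemma qinv_smul (c : ℝ≥0∞) {ν : Measure X} (hν : QInvariant M τ ν) :
    QInvariant M τ (c • ν) := by
  intro f hf hbd
  rw [lintegral_smul_measure, lintegral_smul_measure, hν f hf hbd]

end Stmt4Aux

open Stmt4Aux
/-- Corollary 1.10: `S*` and `R*` are reciprocal linear bijections between the finite
`P`-invariant measures and the finite `Q`-invariant ones, and they preserve ergodicity. -/
theorem stmt4 [MetricSpace X] [CompleteSpace X] [TopologicalSpace.SeparableSpace X] [BorelSpace X]
    (M : MarkovChain X) (τ : (ℕ → X) → ℕ∞)
    (hst : IsPathStoppingTime τ) (hθ : ThetaCompatible M τ)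
    (hτ : ∀ x, EtauE M τ x ≠ ⊤)
    (hQR : ∃ C : ℝ≥0, ∀ x, Qop M τ (Rop M τ 1) x ≤ (C : ℝ≥0∞)) :
    (∀ μ : Measure X, IsFiniteMeasure μ → PInvariant M μ →
        ∃ ν : Measure X, IsFiniteMeasure ν ∧ QInvariant M τ ν ∧ SstarEq M τ μ ν ∧
          RstarEq M τ ν μ) ∧
    (∀ ν : Measure X, IsFiniteMeasure ν → QInvariant M τ ν →
        ∃ μ : Measure X, IsFiniteMeasure μ ∧ PInvariant M μ ∧ RstarEq M τ ν μ ∧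
          SstarEq M τ μ ν) ∧
    (∀ μ ν : Measure X, IsFiniteMeasure μ → PInvariant M μ → SstarEq M τ μ ν →
        ErgodicAmong (PInvariant M) μ → ErgodicAmong (QInvariant M τ) ν) ∧
    (∀ ν μ : Measure X, IsFiniteMeasure ν → QInvariant M τ ν → RstarEq M τ ν μ →
        ErgodicAmong (QInvariant M τ) ν → ErgodicAmong (PInvariant M) μ) := by
  refine ⟨?_, ?_, ?_, ?_⟩
  · intro μ hfin hμ
    haveI := hfin
    obtain ⟨hf, hq, hr⟩ := main_PtoQ hst hθ hτ hμ
    exact ⟨smeas M τ μ, hf, hq, sstarEq_smeas hst μ, hr⟩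
  · intro ν hfin hν
    haveI := hfin
    obtain ⟨hf, hp, hs⟩ := main_QtoP hst hθ hτ hQR hν
    exact ⟨rmeas M τ ν, hf, hp, rstarEq_rmeas hst hτ ν, hs⟩
  · intro μ ν hfin hμ hS herg
    haveI := hfin
    have hν : ν = smeas M τ μ := sstarEq_unique hst hS
    rw [hν]
    refine ergodic_transfer (Inv₁ := PInvariant M) (Inv₂ := QInvariant M τ)
      (F := smeas M τ) (G := rmeas M τ)
      (rmeas_lin hst hτ) (smeas_smul hst) (smeas_zero hst) (rmeas_zero hst hτ)
      ?_ ?_ (fun c m hm => pinv_smul c hm) μ hfin hμ herg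
    · intro m hm hmf
      haveI := hmf
      obtain ⟨h1, h2, h3⟩ := main_PtoQ hst hθ hτ hm
      exact ⟨h2, h1, (rstarEq_unique hst hτ h3).symm⟩
    · intro m hm hmf
      haveI := hmf
      obtain ⟨h1, h2, h3⟩ := main_QtoP hst hθ hτ hQR hm
      exact ⟨h2, h1, (sstarEq_unique hst h3).symm⟩
  · intro ν μ hfin hν hR herg
    haveI := hfin
    have hμ' : μ = rmeas M τ ν := rstarEq_unique hst hτ hR
    rw [hμ']
    refine ergodic_transfer (Inv₁ := QInvariant M τ) (Inv₂ := PInvariant M)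
      (F := rmeas M τ) (G := smeas M τ)
      (smeas_lin hst) (rmeas_smul hst hτ) (rmeas_zero hst hτ) (smeas_zero hst)
      ?_ ?_ (fun c m hm => qinv_smul c hm) ν hfin hν herg
    · intro m hm hmf
      haveI := hmf
      obtain ⟨h1, h2, h3⟩ := main_QtoP hst hθ hτ hQR hm
      exact ⟨h2, h1, (sstarEq_unique hst h3).symm⟩
    · intro m hm hmf
      haveI := hmf
      obtain ⟨h1, h2, h3⟩ := main_PtoQ hst hθ hτ hm
      exact ⟨h2, h1, (rstarEq_unique hst hτ h3).symm⟩

end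
end

section
/- Let u be a drift function. The following three assertions are equivalent: (i) the identity map is a Banach-space isomorphism between 𝓕¹_u and 𝓔¹_u (i.e. it is continuous in both directions); (ii) there exist a ∈ [0,1) and b ∈ ℝ such that Pu ≤ a·u + b on 𝐗; (iii) u ∈ 𝓔¹_u. -/
open MeasureTheory Filter Set Topology
open scoped ENNReal NNReal ENat

noncomputable section

variable {X : Type*} [MeasurableSpace X]

lemma aux_one_le_wE (M : MarkovChain X) (τ : (ℕ → X) → ℕ∞) (u : X → ℝ)
    (hu : IsDrift M τ u) (x : X) : 1 ≤ wE M u x := by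
  have h : Pr M u x - u x ≤ sSup (Set.range fun y => Pr M u y - u y) :=
    le_csSup hu.bdd ⟨x, rfl⟩
  simp only [wE, Bu]
  linarith

lemma aux_one_le_Pr (M : MarkovChain X) (τ : (ℕ → X) → ℕ∞) (u : X → ℝ)
    (hu : IsDrift M τ u) (x : X) : 1 ≤ Pr M u x := by
  haveI := M.prob x
  have h1 : (1:ℝ) = ∫ _ω, (1:ℝ) ∂ M.law x := by simp
  rw [Pr, h1]
  exact integral_mono (integrable_const 1) (hu.int_one x) fun ω => hu.one_le _

lemma aux_wE_le (M : MarkovChain X) (τ : (ℕ → X) → ℕ∞) (u : X → ℝ)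
    (hu : IsDrift M τ u) (x : X) : wE M u x ≤ max 1 (Bu M u) * u x := by
  have h1 := aux_one_le_Pr M τ u hu x
  have h2 := hu.one_le x
  have h3 : (0:ℝ) ≤ (max 1 (Bu M u) - 1) * (u x - 1) :=
    mul_nonneg (sub_nonneg.2 (le_max_left 1 (Bu M u))) (sub_nonneg.2 h2)
  have h4 : Bu M u ≤ max 1 (Bu M u) := le_max_right _ _
  simp only [wE]
  nlinarith

lemma aux_memWp_mono {v w f : X → ℝ} {c : ℝ}
    (hv : ∀ x, 0 ≤ v x) (h : ∀ x, v x ≤ c * w x) (hf : MemWp v 1 f) : MemWp w 1 f := by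
  obtain ⟨hm, K, hK⟩ := hf
  refine ⟨hm, max K 0 * c, fun x => ?_⟩
  simp only [one_div_one, Real.rpow_one] at hK ⊢
  have h1 : |f x| ≤ max K 0 * v x := by
    have := hK x
    nlinarith [le_max_left K 0, hv x]
  calc |f x| ≤ max K 0 * v x := h1
    _ ≤ max K 0 * (c * w x) := mul_le_mul_of_nonneg_left (h x) (le_max_right K 0)
    _ = max K 0 * c * w x := (mul_assoc _ _ _).symm

lemma aux_normWp_mono {v w f : X → ℝ} {c : ℝ} (hc : 0 < c)
    (hv : ∀ x, 1 ≤ v x) (hw : ∀ x, 1 ≤ w x) (h : ∀ x, v x ≤ c * w x)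
    (hf : MemWp v 1 f) : normWp w 1 f ≤ c * normWp v 1 f := by
  cases isEmpty_or_nonempty X with
  | inl hX =>
      simp only [normWp, Real.iSup_of_isEmpty]
      simp
  | inr hX =>
      obtain ⟨_, K, hK⟩ := hf
      simp only [normWp, one_div_one, Real.rpow_one] at hK ⊢
      have hvpos : ∀ x, (0:ℝ) < v x := fun x => lt_of_lt_of_le zero_lt_one (hv x)
      have hwpos : ∀ x, (0:ℝ) < w x := fun x => lt_of_lt_of_le zero_lt_one (hw x)
      have hK' : ∀ x, |f x| / v x ≤ max K 0 := by
        intro x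
        rw [div_le_iff₀ (hvpos x)]
        have := hK x
        nlinarith [le_max_left K 0, (hvpos x).le]
      have hbdd : BddAbove (Set.range fun x => |f x| / v x) := by
        refine ⟨max K 0, ?_⟩
        rintro _ ⟨x, rfl⟩
        exact hK' x
      apply ciSup_le
      intro x
      have h1 : |f x| / w x ≤ c * (|f x| / v x) := by
        rw [mul_div_assoc', div_le_div_iff₀ (hwpos x) (hvpos x)]
        nlinarith [h x, abs_nonneg (f x)]
      have h2 : |f x| / v x ≤ ⨆ y, |f y| / v y := le_ciSup hbdd x
      calc |f x| / w x ≤ c * (|f x| / v x) := h1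
        _ ≤ c * ⨆ y, |f y| / v y := mul_le_mul_of_nonneg_left h2 hc.le

/-- Lemma 2.7: for a drift function `u`, the identity map being a Banach space isomorphism
between `𝓕¹_u` and `𝓔¹_u`, the existence of `a ∈ [0,1)` and `b` with `Pu ≤ a u + b`,
and `u ∈ 𝓔¹_u`, are equivalent. -/
theorem stmt6 (M : MarkovChain X) (τ : (ℕ → X) → ℕ∞)
    (hst : IsPathStoppingTime τ) (hθ : ThetaCompatible M τ)
    (u : X → ℝ) (hu : IsDrift M τ u) :
    (((∀ f : X → ℝ, MemWp u 1 f ↔ MemWp (wE M u) 1 f) ∧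
        (∃ C : ℝ, 0 < C ∧ ∀ f : X → ℝ, MemWp u 1 f →
          normWp (wE M u) 1 f ≤ C * normWp u 1 f) ∧
        (∃ C : ℝ, 0 < C ∧ ∀ f : X → ℝ, MemWp (wE M u) 1 f →
          normWp u 1 f ≤ C * normWp (wE M u) 1 f)) ↔
      (∃ a b : ℝ, 0 ≤ a ∧ a < 1 ∧ ∀ x, Pr M u x ≤ a * u x + b)) ∧
    ((∃ a b : ℝ, 0 ≤ a ∧ a < 1 ∧ ∀ x, Pr M u x ≤ a * u x + b) ↔
      MemWp (wE M u) 1 u) := by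
  have hwE1 : ∀ x, 1 ≤ wE M u x := aux_one_le_wE M τ u hu
  have hwEpos : ∀ x, (0:ℝ) < wE M u x := fun x => lt_of_lt_of_le zero_lt_one (hwE1 x)
  have hu1 : ∀ x, 1 ≤ u x := hu.one_le
  have hupos : ∀ x, (0:ℝ) < u x := fun x => lt_of_lt_of_le zero_lt_one (hu1 x)
  -- (iii) ↔ ∃ C ≥ 1, u ≤ C • wE
  have h3iff : MemWp (wE M u) 1 u ↔ ∃ C : ℝ, 1 ≤ C ∧ ∀ x, u x ≤ C * wE M u x := by
    constructor
    · rintro ⟨hm, C, hC⟩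
      refine ⟨max C 1, le_max_right _ _, fun x => ?_⟩
      have h1 := hC x
      simp only [one_div_one, Real.rpow_one] at h1
      rw [abs_of_pos (hupos x)] at h1
      nlinarith [le_max_left C 1, (hwEpos x).le]
    · rintro ⟨C, _, hC⟩
      refine ⟨hu.meas, C, fun x => ?_⟩
      simp only [one_div_one, Real.rpow_one]
      rw [abs_of_pos (hupos x)]
      exact hC x
  -- (ii) ↔ ∃ C ≥ 1, u ≤ C • wE
  have h2iff : (∃ a b : ℝ, 0 ≤ a ∧ a < 1 ∧ ∀ x, Pr M u x ≤ a * u x + b) ↔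
      ∃ C : ℝ, 1 ≤ C ∧ ∀ x, u x ≤ C * wE M u x := by
    constructor
    · rintro ⟨a, b, ha0, ha1, hab⟩
      have h1a : (0:ℝ) < 1 - a := by linarith
      set K : ℝ := max 1 (max 0 (b - Bu M u)) with hK
      have hK1 : (1:ℝ) ≤ K := le_max_left _ _
      have hKb : b - Bu M u ≤ K := le_trans (le_max_right 0 _) (le_max_right 1 _)
      refine ⟨2 * K / (1 - a), ?_, fun x => ?_⟩
      · rw [le_div_iff₀ h1a]; nlinarith
      · rw [div_mul_eq_mul_div, le_div_iff₀ h1a]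
        have hwEx : wE M u x = u x - Pr M u x + Bu M u := rfl
        have hab' := hab x
        rcases le_or_gt ((1 - a) * u x) (2 * K) with hcase | hcase
        · nlinarith [hwE1 x, hupos x]
        · nlinarith [hwE1 x, hupos x]
    · rintro ⟨C, hC1, hC⟩
      have hC0 : (0:ℝ) < C := lt_of_lt_of_le zero_lt_one hC1
      have hCC : C * (1 / C) = 1 := by field_simp
      refine ⟨1 - 1 / C, Bu M u, ?_, ?_, fun x => ?_⟩
      · have : 1 / C ≤ 1 := by rw [div_le_one hC0]; exact hC1
        linarith
      · have : (0:ℝ) < 1 / C := by positivity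
        linarith
      · have h1 := hC x
        have hwEx : wE M u x = u x - Pr M u x + Bu M u := rfl
        rw [hwEx] at h1
        have hexp : C * ((1 - 1 / C) * u x + Bu M u)
            = C * u x - u x + C * Bu M u := by field_simp
        have key : C * Pr M u x ≤ C * ((1 - 1 / C) * u x + Bu M u) := by
          rw [hexp]; nlinarith [h1]
        exact le_of_mul_le_mul_left key hC0
  constructor
  · constructor
    · rintro ⟨hmem, -, -⟩
      apply h2iff.mpr
      apply h3iff.mp
      apply (hmem u).mp
      refine ⟨hu.meas, 1, fun x => ?_⟩
      simp only [one_div_one, Real.rpow_one, one_mul]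
      exact le_of_eq (abs_of_pos (hupos x))
    · intro h2
      obtain ⟨C, hC1, hC⟩ := h2iff.mp h2
      have hC0 : (0:ℝ) < C := lt_of_lt_of_le zero_lt_one hC1
      set Cw : ℝ := max 1 (Bu M u) with hCw
      have hCw1 : (1:ℝ) ≤ Cw := le_max_left _ _
      have hCw0 : (0:ℝ) < Cw := lt_of_lt_of_le zero_lt_one hCw1
      have hwle : ∀ x, wE M u x ≤ Cw * u x := aux_wE_le M τ u hu
      refine ⟨fun f => ⟨fun hf => ?_, fun hf => ?_⟩, ⟨C, hC0, fun f hf => ?_⟩,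
        ⟨Cw, hCw0, fun f hf => ?_⟩⟩
      · exact aux_memWp_mono (fun x => (hupos x).le) hC hf
      · exact aux_memWp_mono (fun x => (hwEpos x).le) hwle hf
      · exact aux_normWp_mono hC0 hu1 hwE1 hC hf
      · exact aux_normWp_mono hCw0 hwE1 hu1 hwle hf
  · exact h2iff.trans h3iff.symm

end
end

section
/- Let u be a drift function, x ∈ 𝐗, and α ∈ ℝ₊. Then sup_{n∈ℕ} Σ_{k=0}^{n} P^k(u − Pu)(x)/(k+1)^α ≤ u(x). -/
open MeasureTheory Filter Set Topology
open scoped ENNReal NNReal ENat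

noncomputable section

variable {X : Type*} [MeasurableSpace X]

lemma measurable_Pr (M : MarkovChain X) {f : X → ℝ} (hf : Measurable f) :
    Measurable (Pr M f) := by
  let κ : ProbabilityTheory.Kernel X (ℕ → X) := ⟨M.law, M.meas_law⟩
  haveI : ProbabilityTheory.IsMarkovKernel κ := ⟨M.prob⟩
  have hsm : StronglyMeasurable fun p : X × (ℕ → X) => f (p.2 1) :=
    (hf.comp ((measurable_pi_apply 1).comp measurable_snd)).stronglyMeasurable
  exact (hsm.integral_kernel_prod_right' (κ := κ)).measurable

/-- Lemma 3.1 (Abel summation): for a drift function `u`, any `x` and any `α ≥ 0`,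
`sup_n ∑_{k=0}^{n} P^k(u - Pu)(x)/(k+1)^α ≤ u(x)`. -/
theorem stmt10 (M : MarkovChain X) (τ : (ℕ → X) → ℕ∞)
    (hst : IsPathStoppingTime τ) (hθ : ThetaCompatible M τ)
    (u : X → ℝ) (hu : IsDrift M τ u) (x : X) (α : ℝ) (hα : 0 ≤ α) :
    ∀ n : ℕ, ∑ k ∈ Finset.range (n + 1),
        ((Pr M)^[k] (fun y => u y - Pr M u y) x) / ((k : ℝ) + 1) ^ α ≤ u x := by
  set b : ℝ := sSup (Set.range fun y => Pr M u y - u y) with hbdef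
  have hb : ∀ y, Pr M u y - u y ≤ b := fun y => le_csSup hu.bdd ⟨y, rfl⟩
  -- properties of the iterates u_k = P^[k] u
  have key : ∀ k : ℕ, Measurable ((Pr M)^[k] u) ∧ (∀ y, 1 ≤ (Pr M)^[k] u y) ∧
      (∀ y, (Pr M)^[k] u y ≤ u y + (k : ℝ) * b) := by
    intro k
    induction k with
    | zero =>
      refine ⟨hu.meas, hu.one_le, fun y => by simp⟩
    | succ k ih =>
      obtain ⟨hm, h1, hub⟩ := ih
      have hintk : ∀ y, Integrable (fun ω => (Pr M)^[k] u (ω 1)) (M.law y) := by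
        intro y
        haveI := M.prob y
        refine Integrable.mono' ((hu.int_one y).add (integrable_const ((k : ℝ) * b)))
          ((hm.comp (measurable_pi_apply 1)).aestronglyMeasurable) ?_
        filter_upwards with ω
        rw [Real.norm_of_nonneg (by linarith [h1 (ω 1)])]
        exact hub (ω 1)
      rw [Function.iterate_succ_apply' (Pr M) k u]
      refine ⟨measurable_Pr M hm, ?_, ?_⟩
      · intro y
        haveI := M.prob y
        have := integral_mono (integrable_const (1 : ℝ)) (hintk y)
          (fun ω => h1 (ω 1))
        simpa [Pr] using this
      · intro y
        haveI := M.prob y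
        have h2 : Pr M ((Pr M)^[k] u) y ≤ Pr M u y + (k : ℝ) * b := by
          have := integral_mono (hintk y)
            ((hu.int_one y).add (integrable_const ((k : ℝ) * b)))
            (fun ω => hub (ω 1))
          simp only [Pi.add_apply] at this
          rw [integral_add (hu.int_one y) (integrable_const _), integral_const] at this
          simpa [Pr] using this
        have := hb y
        push_cast
        linarith
  have hintk : ∀ (k : ℕ) (y : X), Integrable (fun ω => (Pr M)^[k] u (ω 1)) (M.law y) := by
    intro k y
    obtain ⟨hm, h1, hub⟩ := key k
    haveI := M.prob y
    refine Integrable.mono' ((hu.int_one y).add (integrable_const ((k : ℝ) * b)))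
      ((hm.comp (measurable_pi_apply 1)).aestronglyMeasurable) ?_
    filter_upwards with ω
    rw [Real.norm_of_nonneg (by linarith [h1 (ω 1)])]
    exact hub (ω 1)
  -- telescoping identity
  have tel : ∀ k : ℕ, (Pr M)^[k] (fun y => u y - Pr M u y)
      = fun y => (Pr M)^[k] u y - (Pr M)^[k + 1] u y := by
    intro k
    induction k with
    | zero => simp
    | succ k ih =>
      rw [Function.iterate_succ_apply' (Pr M), ih]
      funext y
      have hdef : Pr M (fun z => (Pr M)^[k] u z - (Pr M)^[k + 1] u z) y
          = ∫ ω, ((Pr M)^[k] u (ω 1) - (Pr M)^[k + 1] u (ω 1)) ∂M.law y := rfl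
      show Pr M (fun z => (Pr M)^[k] u z - (Pr M)^[k + 1] u z) y = _
      rw [hdef, integral_sub (hintk k y) (hintk (k + 1) y)]
      conv_rhs => rw [Function.iterate_succ_apply' (Pr M) k u,
        Function.iterate_succ_apply' (Pr M) (k + 1) u]
      rfl
  -- Abel summation bound, strengthened for the induction
  have cpos : ∀ k : ℕ, (0 : ℝ) < ((k : ℝ) + 1) ^ α := fun k => by positivity
  have cmono : ∀ k : ℕ, ((k : ℝ) + 1) ^ α ≤ ((k : ℝ) + 1 + 1) ^ α := by
    intro k
    exact Real.rpow_le_rpow (by positivity) (by linarith) hα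
  have main : ∀ n : ℕ, ∑ k ∈ Finset.range (n + 1),
      ((Pr M)^[k] u x - (Pr M)^[k + 1] u x) / ((k : ℝ) + 1) ^ α
      + ((Pr M)^[n + 1] u x) / ((n : ℝ) + 1) ^ α ≤ u x := by
    intro n
    induction n with
    | zero =>
      simp [Real.one_rpow]
    | succ n ih =>
      rw [Finset.sum_range_succ]
      have h1 : (0 : ℝ) ≤ (Pr M)^[n + 2] u x := le_trans zero_le_one ((key (n + 2)).2.1 x)
      have h2 : ((Pr M)^[n + 2] u x) / ((n : ℝ) + 1 + 1) ^ α
          ≤ ((Pr M)^[n + 2] u x) / ((n : ℝ) + 1) ^ α := by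
        exact div_le_div_of_nonneg_left h1 (cpos n) (cmono n)
      have h3 : ((Pr M)^[n + 1] u x - (Pr M)^[n + 2] u x) / ((n : ℝ) + 1 + 1) ^ α
          + ((Pr M)^[n + 2] u x) / ((n : ℝ) + 1 + 1) ^ α
          = ((Pr M)^[n + 1] u x) / ((n : ℝ) + 1 + 1) ^ α := by
        rw [← add_div]; ring_nf
      have h4 : ((Pr M)^[n + 1] u x) / ((n : ℝ) + 1 + 1) ^ α
          ≤ ((Pr M)^[n + 1] u x) / ((n : ℝ) + 1) ^ α := by
        refine div_le_div_of_nonneg_left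
          (le_trans zero_le_one ((key (n + 1)).2.1 x)) (cpos n) (cmono n)
      push_cast
      push_cast at ih
      linarith
  intro n
  have := main n
  have h0 : (0 : ℝ) ≤ ((Pr M)^[n + 1] u x) / ((n : ℝ) + 1) ^ α :=
    div_nonneg (le_trans zero_le_one ((key (n + 1)).2.1 x)) (le_of_lt (cpos n))
  calc ∑ k ∈ Finset.range (n + 1),
        ((Pr M)^[k] (fun y => u y - Pr M u y) x) / ((k : ℝ) + 1) ^ α
      = ∑ k ∈ Finset.range (n + 1),
        ((Pr M)^[k] u x - (Pr M)^[k + 1] u x) / ((k : ℝ) + 1) ^ α := by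
        refine Finset.sum_congr rfl fun k _ => ?_
        rw [tel k]
    _ ≤ u x := by linarith

end
end

section
/- Let u be a drift function and α ∈ ℝ₊*. Then for every f ∈ 𝓔¹_u and every x ∈ 𝐗 with u(x) < ∞, the series Σ_{k≥0} 𝔼_x|f(X_k)|/(k+1)^{1+α} is finite; consequently f(X_n)/n^{1+α} → 0 as n → ∞, both ℙ_x-almost everywhere and in L¹(ℙ_x). -/
open MeasureTheory Filter Set Topology
open scoped ENNReal NNReal ENat

noncomputable section

variable {X : Type*} [MeasurableSpace X]

/-- Bernoulli-type decrement bound. -/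
lemma my_bern {p b : ℝ} (hp : 1 ≤ p) (hb : 1 ≤ b) :
    (b ^ p)⁻¹ - ((b + 1) ^ p)⁻¹ ≤ p * (b ^ p)⁻¹ / (b + 1) := by
  have hb0 : 0 < b := by linarith
  have hb1 : 0 < b + 1 := by linarith
  have hz : -1 ≤ -(1 / (b + 1)) := by
    rw [neg_le_neg_iff]
    rw [div_le_one hb1]; linarith
  have key := one_add_mul_self_le_rpow_one_add hz hp
  have h1 : (1 : ℝ) + -(1 / (b + 1)) = b / (b + 1) := by field_simp; ring
  rw [h1] at key
  have hdiv : (b / (b + 1)) ^ p = b ^ p / (b + 1) ^ p := Real.div_rpow hb0.le hb1.le p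
  rw [hdiv] at key
  -- key : 1 + p * -(1/(b+1)) ≤ b^p/(b+1)^p
  have hbp : (0 : ℝ) < b ^ p := Real.rpow_pos_of_pos hb0 _
  have hbp1 : (0 : ℝ) < (b + 1) ^ p := Real.rpow_pos_of_pos hb1 _
  have := mul_le_mul_of_nonneg_left key (le_of_lt (inv_pos.2 hbp))
  have h2 : (b ^ p)⁻¹ * (b ^ p / (b + 1) ^ p) = ((b + 1) ^ p)⁻¹ := by
    field_simp
  rw [h2] at this
  have h3 : (b ^ p)⁻¹ * (1 + p * -(1 / (b + 1))) = (b ^ p)⁻¹ - p * (b ^ p)⁻¹ / (b + 1) := by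
    ring
  rw [h3] at this
  linarith

/-- Abel-summation bound: if partial sums of a nonnegative sequence grow at most linearly,
then the weighted sums with weights `(k+1)^(-p)`, `p > 1`, are uniformly bounded. -/
lemma my_abel {p : ℝ} (hp : 1 < p) {A : ℝ} (hA : 0 ≤ A) {e : ℕ → ℝ}
    (he : ∀ k, 0 ≤ e k) (hE : ∀ n, ∑ k ∈ Finset.range n, e k ≤ A * ((n : ℝ) + 1)) :
    ∃ Mb : ℝ, ∀ n, ∑ k ∈ Finset.range n, e k / ((k : ℝ) + 1) ^ p ≤ Mb := by
  set a : ℕ → ℝ := fun k => (((k : ℝ) + 1) ^ p)⁻¹ with ha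
  have hapos : ∀ k, 0 < a k := fun k =>
    inv_pos.2 (Real.rpow_pos_of_pos (by positivity) _)
  set E : ℕ → ℝ := fun n => ∑ k ∈ Finset.range n, e k with hEdef
  have hEsucc : ∀ k, E (k + 1) = E k + e k := fun k => Finset.sum_range_succ _ _
  have hanti : ∀ k, a (k + 1) ≤ a k := by
    intro k
    apply inv_anti₀ (Real.rpow_pos_of_pos (by positivity) _)
    apply Real.rpow_le_rpow (by positivity) (by push_cast; linarith) (by linarith)
  -- summability of a
  have hsum : Summable a := by
    have h0 : Summable (fun n : ℕ => ((n : ℝ) ^ p)⁻¹) := Real.summable_nat_rpow_inv.2 hp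
    have := h0.comp_injective Nat.succ_injective
    refine this.congr fun k => ?_
    simp [Function.comp, Nat.succ_eq_add_one, ha]
  set L : ℝ := ∑' k, a k with hL
  have haL : ∀ n, ∑ k ∈ Finset.range n, a k ≤ L :=
    fun n => Summable.sum_le_tsum (Finset.range n) (fun k _ => (hapos k).le) hsum
  refine ⟨A + A * p * L, fun n => ?_⟩
  have key : ∑ k ∈ Finset.range n, e k / ((k : ℝ) + 1) ^ p
      = (E n * a n - E 0 * a 0) + ∑ k ∈ Finset.range n, E (k + 1) * (a k - a (k + 1)) := by
    rw [← Finset.sum_range_sub (fun k => E k * a k), ← Finset.sum_add_distrib]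
    apply Finset.sum_congr rfl
    intro k _
    have : e k / ((k : ℝ) + 1) ^ p = e k * a k := by
      rw [ha]; simp [div_eq_mul_inv]
    rw [this, hEsucc k]; ring
  rw [key]
  have hterm : ∀ k, E (k + 1) * (a k - a (k + 1)) ≤ A * p * a k := by
    intro k
    have h1 : E (k + 1) ≤ A * ((k : ℝ) + 2) := by
      have := hE (k + 1); push_cast at this ⊢; linarith
    have h2 : a k - a (k + 1) ≤ p * a k / ((k : ℝ) + 2) := by
      have := my_bern hp.le (by push_cast; linarith : (1 : ℝ) ≤ (k : ℝ) + 1)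
      have hc : ((k : ℝ) + 1) + 1 = (k : ℝ) + 2 := by ring
      rw [hc] at this
      convert this using 2 <;> (rw [ha]; push_cast; ring_nf)
    have h3 : 0 ≤ a k - a (k + 1) := sub_nonneg.2 (hanti k)
    calc E (k + 1) * (a k - a (k + 1)) ≤ A * ((k : ℝ) + 2) * (a k - a (k + 1)) := by
          apply mul_le_mul_of_nonneg_right h1 h3
      _ ≤ A * ((k : ℝ) + 2) * (p * a k / ((k : ℝ) + 2)) := by
          apply mul_le_mul_of_nonneg_left h2 (by positivity)
      _ = A * p * a k := by field_simp
  have hsum2 : ∑ k ∈ Finset.range n, E (k + 1) * (a k - a (k + 1))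
      ≤ A * p * L := by
    calc ∑ k ∈ Finset.range n, E (k + 1) * (a k - a (k + 1))
        ≤ ∑ k ∈ Finset.range n, A * p * a k := Finset.sum_le_sum fun k _ => hterm k
      _ = A * p * ∑ k ∈ Finset.range n, a k := by rw [Finset.mul_sum]
      _ ≤ A * p * L := by
          apply mul_le_mul_of_nonneg_left (haL n) (by positivity)
  have hEa : E n * a n ≤ A := by
    have h1 : E n ≤ A * ((n : ℝ) + 1) := hE n
    have h2 : a n ≤ (((n : ℝ) + 1))⁻¹ := by
      rw [ha]
      apply inv_anti₀ (by positivity)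
      nth_rewrite 1 [← Real.rpow_one ((n : ℝ) + 1)]
      exact Real.rpow_le_rpow_of_exponent_le (by push_cast; linarith) hp.le
    have hEnn : 0 ≤ E n := Finset.sum_nonneg fun k _ => he k
    calc E n * a n ≤ (A * ((n : ℝ) + 1)) * (((n : ℝ) + 1))⁻¹ :=
          mul_le_mul h1 h2 (hapos n).le (by positivity)
      _ = A := by field_simp
  have hE0 : E 0 * a 0 = 0 := by simp [hEdef]
  rw [hE0]
  linarith

/-- Lemma 3.2: for a drift function `u`, `α > 0`, `f ∈ 𝓔¹_u` and any `x`, the series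
`∑_k 𝔼_x|f(X_k)|/(k+1)^{1+α}` is finite, and `f(X_n)/n^{1+α} → 0` both `ℙ_x`-a.e.
and in `L¹(ℙ_x)`. -/
theorem stmt11 (M : MarkovChain X) (τ : (ℕ → X) → ℕ∞)
    (hst : IsPathStoppingTime τ) (hθ : ThetaCompatible M τ)
    (u : X → ℝ) (hu : IsDrift M τ u) (α : ℝ) (hα : 0 < α)
    (f : X → ℝ) (hf : MemWp (wE M u) 1 f) (x : X) :
    (∑' k : ℕ, (∫⁻ ω, ENNReal.ofReal |f (ω k)| ∂M.law x) /
        ENNReal.ofReal (((k : ℝ) + 1) ^ (1 + α))) ≠ ⊤ ∧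
    (∀ᵐ ω ∂M.law x,
      Tendsto (fun n : ℕ => f (ω n) / (n : ℝ) ^ (1 + α)) atTop (𝓝 0)) ∧
    Tendsto (fun n : ℕ => ∫ ω, |f (ω n) / (n : ℝ) ^ (1 + α)| ∂M.law x) atTop (𝓝 0) := by
  classical
  haveI hPx : IsProbabilityMeasure (M.law x) := M.prob x
  obtain ⟨hfm, C0, hfC0⟩ := hf
  set p : ℝ := 1 + α with hpdef
  have hp1 : (1 : ℝ) < p := by rw [hpdef]; linarith
  have hp0 : (0 : ℝ) < p := by linarith
  -- basic facts about u, Pr, wE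
  have hPrnn : ∀ y, 0 ≤ Pr M u y :=
    fun y => integral_nonneg fun ω => le_trans zero_le_one (hu.one_le _)
  have hsle : ∀ y, Pr M u y - u y ≤ sSup (Set.range fun z => Pr M u z - u z) :=
    fun y => le_csSup hu.bdd ⟨y, rfl⟩
  have hw1 : ∀ y, 1 ≤ wE M u y := fun y => by
    have h := hsle y
    unfold wE Bu
    linarith
  set C : ℝ := max C0 0 with hCdef
  have hC0 : 0 ≤ C := le_max_right _ _
  have hfC : ∀ y, |f y| ≤ C * wE M u y := fun y => by
    have h := hfC0 y
    rw [show (1 : ℝ)/1 = 1 by norm_num, Real.rpow_one] at h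
    have hwnn : 0 ≤ wE M u y := le_trans zero_le_one (hw1 y)
    exact le_trans h (mul_le_mul_of_nonneg_right (le_max_left _ _) hwnn)
  set B0 : ℝ := max (Bu M u) 0 with hB0def
  have hB0nn : 0 ≤ B0 := le_max_right _ _
  have hwle : ∀ y, wE M u y + Pr M u y ≤ u y + B0 := fun y => by
    have h1 : Bu M u ≤ B0 := le_max_left _ _
    unfold wE
    linarith
  set s0 : ℝ := max (sSup (Set.range fun z => Pr M u z - u z)) 0 with hs0def
  have hs0nn : 0 ≤ s0 := le_max_right _ _
  have hPru_le : ∀ y, Pr M u y ≤ u y + s0 := fun y => by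
    have h1 := hsle y
    have h2 : sSup (Set.range fun z => Pr M u z - u z) ≤ s0 := le_max_left _ _
    linarith
  -- measurability
  have hum := hu.meas
  have hgm : Measurable fun y => ENNReal.ofReal (u y) := ENNReal.measurable_ofReal.comp hum
  have hPop : ∀ y, (∫⁻ η, ENNReal.ofReal (u (η 1)) ∂M.law y) = ENNReal.ofReal (Pr M u y) :=
    fun y => (ofReal_integral_eq_lintegral_ofReal (hu.int_one y)
      (Eventually.of_forall fun ω => le_trans zero_le_one (hu.one_le _))).symm
  have hPrm : Measurable (Pr M u) := by
    have h1 : Measurable fun y => ∫⁻ η, ENNReal.ofReal (u (η 1)) ∂M.law y :=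
      (Measure.measurable_lintegral (hgm.comp (measurable_pi_apply 1))).comp M.meas_law
    have h2 : Pr M u = fun y => (∫⁻ η, ENNReal.ofReal (u (η 1)) ∂M.law y).toReal := by
      funext y
      rw [hPop y, ENNReal.toReal_ofReal (hPrnn y)]
    rw [h2]
    exact h1.ennreal_toReal
  have hwm : Measurable (wE M u) := by
    unfold wE
    exact (hum.sub hPrm).add_const _
  have hwmE : Measurable fun y => ENNReal.ofReal (wE M u y) := ENNReal.measurable_ofReal.comp hwm
  -- the sequence U n = E_x u(X_n)
  set U : ℕ → ℝ≥0∞ := fun n => ∫⁻ ω, ENNReal.ofReal (u (ω n)) ∂M.law x with hUdef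
  have hU0 : U 0 = ENNReal.ofReal (u x) := by
    show (∫⁻ ω, ENNReal.ofReal (u (ω 0)) ∂M.law x) = ENNReal.ofReal (u x)
    rw [← lintegral_map hgm (measurable_pi_apply 0), M.start x, lintegral_dirac' _ hgm]
  have hUsucc : ∀ n, U (n + 1) = ∫⁻ ω, ENNReal.ofReal (Pr M u (ω n)) ∂M.law x := by
    intro n
    have h := M.markov x n Set.univ (@MeasurableSet.univ _ (pathFiltration X n))
      (fun η => ENNReal.ofReal (u (η 1))) (hgm.comp (measurable_pi_apply 1))
    rw [Measure.restrict_univ] at h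
    calc U (n + 1) = ∫⁻ ω, ENNReal.ofReal (u (ω (1 + n))) ∂M.law x := by
          show (∫⁻ ω, ENNReal.ofReal (u (ω (n + 1))) ∂M.law x) = _
          rw [show n + 1 = 1 + n from Nat.add_comm n 1]
      _ = ∫⁻ ω, ∫⁻ η, ENNReal.ofReal (u (η 1)) ∂M.law (ω n) ∂M.law x := h
      _ = ∫⁻ ω, ENNReal.ofReal (Pr M u (ω n)) ∂M.law x := lintegral_congr fun ω => hPop (ω n)
  have hUstep : ∀ n, U (n + 1) ≤ U n + ENNReal.ofReal s0 := fun n => by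
    rw [hUsucc n]
    calc ∫⁻ ω, ENNReal.ofReal (Pr M u (ω n)) ∂M.law x
        ≤ ∫⁻ ω, (ENNReal.ofReal (u (ω n)) + ENNReal.ofReal s0) ∂M.law x := by
          apply lintegral_mono
          intro ω
          exact le_trans (ENNReal.ofReal_le_ofReal (hPru_le _)) ENNReal.ofReal_add_le
      _ = U n + ENNReal.ofReal s0 := by
          rw [lintegral_add_right _ measurable_const, lintegral_const, measure_univ, mul_one]
  have hUb : ∀ n, U n ≤ ENNReal.ofReal (u x) + n * ENNReal.ofReal s0 := by
    intro n
    induction n with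
    | zero => simp [hU0]
    | succ n ih =>
      calc U (n + 1) ≤ U n + ENNReal.ofReal s0 := hUstep n
        _ ≤ (ENNReal.ofReal (u x) + n * ENNReal.ofReal s0) + ENNReal.ofReal s0 :=
            add_le_add ih le_rfl
        _ = ENNReal.ofReal (u x) + (n + 1 : ℕ) * ENNReal.ofReal s0 := by
            push_cast
            ring
  -- the sequence W n = E_x wE(X_n), satisfying the telescoping estimate
  set W : ℕ → ℝ≥0∞ := fun n => ∫⁻ ω, ENNReal.ofReal (wE M u (ω n)) ∂M.law x with hWdef
  have hWkey : ∀ n, W n + U (n + 1) ≤ U n + ENNReal.ofReal B0 := fun n => by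
    rw [hUsucc n]
    have hadd : W n + (∫⁻ ω, ENNReal.ofReal (Pr M u (ω n)) ∂M.law x)
        = ∫⁻ ω, (ENNReal.ofReal (wE M u (ω n)) + ENNReal.ofReal (Pr M u (ω n))) ∂M.law x :=
      (lintegral_add_left (hwmE.comp (measurable_pi_apply n)) _).symm
    rw [hadd]
    calc ∫⁻ ω, (ENNReal.ofReal (wE M u (ω n)) + ENNReal.ofReal (Pr M u (ω n))) ∂M.law x
        ≤ ∫⁻ ω, (ENNReal.ofReal (u (ω n)) + ENNReal.ofReal B0) ∂M.law x := by
          apply lintegral_mono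
          intro ω
          show ENNReal.ofReal (wE M u (ω n)) + ENNReal.ofReal (Pr M u (ω n))
              ≤ ENNReal.ofReal (u (ω n)) + ENNReal.ofReal B0
          rw [← ENNReal.ofReal_add (le_trans zero_le_one (hw1 _)) (hPrnn _)]
          exact le_trans (ENNReal.ofReal_le_ofReal (hwle _)) ENNReal.ofReal_add_le
      _ = U n + ENNReal.ofReal B0 := by
          rw [lintegral_add_right _ measurable_const, lintegral_const, measure_univ, mul_one]
  have hTU : ∀ n, (∑ k ∈ Finset.range n, W k) + U n ≤ U 0 + n * ENNReal.ofReal B0 := by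
    intro n
    induction n with
    | zero => simp
    | succ n ih =>
      calc (∑ k ∈ Finset.range (n + 1), W k) + U (n + 1)
          = (∑ k ∈ Finset.range n, W k) + (W n + U (n + 1)) := by
            rw [Finset.sum_range_succ]
            ring
        _ ≤ (∑ k ∈ Finset.range n, W k) + (U n + ENNReal.ofReal B0) := add_le_add le_rfl (hWkey n)
        _ = ((∑ k ∈ Finset.range n, W k) + U n) + ENNReal.ofReal B0 := by ring
        _ ≤ (U 0 + n * ENNReal.ofReal B0) + ENNReal.ofReal B0 := add_le_add ih le_rfl
        _ = U 0 + (n + 1 : ℕ) * ENNReal.ofReal B0 := by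
            push_cast
            ring
  -- the sequence ν n = E_x |f(X_n)|
  set ν : ℕ → ℝ≥0∞ := fun n => ∫⁻ ω, ENNReal.ofReal |f (ω n)| ∂M.law x with hνdef
  have hνW : ∀ n, ν n ≤ ENNReal.ofReal C * W n := fun n => by
    show (∫⁻ ω, ENNReal.ofReal |f (ω n)| ∂M.law x)
        ≤ ENNReal.ofReal C * ∫⁻ ω, ENNReal.ofReal (wE M u (ω n)) ∂M.law x
    rw [← lintegral_const_mul _ (show Measurable fun ω : ℕ → X =>
      ENNReal.ofReal (wE M u (ω n)) from hwmE.comp (measurable_pi_apply n))]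
    apply lintegral_mono
    intro ω
    show ENNReal.ofReal |f (ω n)| ≤ ENNReal.ofReal C * ENNReal.ofReal (wE M u (ω n))
    rw [← ENNReal.ofReal_mul hC0]
    exact ENNReal.ofReal_le_ofReal (hfC _)
  set A : ℝ := C * (u x + B0) with hAdef
  have hux1 : (1 : ℝ) ≤ u x := hu.one_le x
  have hAnn : 0 ≤ A := by
    have : (0:ℝ) ≤ u x + B0 := by linarith
    exact mul_nonneg hC0 this
  have hbound : ∀ n, (∑ k ∈ Finset.range n, ν k) ≤ ENNReal.ofReal (A * ((n : ℝ) + 1)) := by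
    intro n
    have h1 : (∑ k ∈ Finset.range n, ν k) ≤ ENNReal.ofReal C * ((∑ k ∈ Finset.range n, W k)) :=
      le_trans (Finset.sum_le_sum fun k _ => hνW k) (le_of_eq (Finset.mul_sum _ _ _).symm)
    have h2 : (∑ k ∈ Finset.range n, W k) ≤ ENNReal.ofReal (u x) + n * ENNReal.ofReal B0 := by
      have := hTU n
      rw [hU0] at this
      exact le_trans le_self_add this
    calc (∑ k ∈ Finset.range n, ν k)
        ≤ ENNReal.ofReal C * (ENNReal.ofReal (u x) + n * ENNReal.ofReal B0) :=
          le_trans h1 (by gcongr)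
      _ = ENNReal.ofReal (C * (u x + n * B0)) := by
          rw [← ENNReal.ofReal_natCast n, ← ENNReal.ofReal_mul (by positivity),
            ← ENNReal.ofReal_add (by linarith) (by positivity),
            ← ENNReal.ofReal_mul hC0]
      _ ≤ ENNReal.ofReal (A * ((n : ℝ) + 1)) := by
          apply ENNReal.ofReal_le_ofReal
          rw [hAdef]
          nlinarith [Nat.cast_nonneg (α := ℝ) n, mul_nonneg hC0 hB0nn,
            mul_nonneg (mul_nonneg hC0 (by linarith : (0:ℝ) ≤ u x)) (Nat.cast_nonneg (α := ℝ) n)]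
  have hνlt : ∀ n, ν n < ⊤ := fun n => by
    have h1 : ν n ≤ ∑ k ∈ Finset.range (n + 1), ν k :=
      Finset.single_le_sum (fun k _ => zero_le) (Finset.self_mem_range_succ n)
    exact lt_of_le_of_lt (le_trans h1 (hbound (n + 1))) ENNReal.ofReal_lt_top
  set e : ℕ → ℝ := fun n => (ν n).toReal with hedef
  have hνe : ∀ n, ν n = ENNReal.ofReal (e n) := fun n => (ENNReal.ofReal_toReal (hνlt n).ne).symm
  have hen : ∀ n, 0 ≤ e n := fun n => ENNReal.toReal_nonneg
  have heE : ∀ n, ∑ k ∈ Finset.range n, e k ≤ A * ((n : ℝ) + 1) := by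
    intro n
    have h1 := ENNReal.toReal_mono ENNReal.ofReal_ne_top (hbound n)
    rw [ENNReal.toReal_sum (fun k _ => (hνlt k).ne)] at h1
    rw [ENNReal.toReal_ofReal (by positivity)] at h1
    exact h1
  obtain ⟨Mb, hMb⟩ := my_abel hp1 hAnn hen heE
  -- Part 1
  have part1 : (∑' k : ℕ, ν k / ENNReal.ofReal (((k : ℝ) + 1) ^ p)) ≠ ⊤ := by
    have hterm : ∀ k : ℕ, ν k / ENNReal.ofReal (((k : ℝ) + 1) ^ p)
        = ENNReal.ofReal (e k / ((k : ℝ) + 1) ^ p) := fun k => by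
      rw [hνe k, ENNReal.ofReal_div_of_pos (Real.rpow_pos_of_pos (by positivity) _)]
    have hble : ∀ n, ∑ k ∈ Finset.range n, ν k / ENNReal.ofReal (((k : ℝ) + 1) ^ p)
        ≤ ENNReal.ofReal Mb := by
      intro n
      calc ∑ k ∈ Finset.range n, ν k / ENNReal.ofReal (((k : ℝ) + 1) ^ p)
          = ∑ k ∈ Finset.range n, ENNReal.ofReal (e k / ((k : ℝ) + 1) ^ p) :=
            Finset.sum_congr rfl fun k _ => hterm k
        _ = ENNReal.ofReal (∑ k ∈ Finset.range n, e k / ((k : ℝ) + 1) ^ p) :=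
            (ENNReal.ofReal_sum_of_nonneg fun k _ =>
              div_nonneg (hen k) (Real.rpow_pos_of_pos (by positivity) _).le).symm
        _ ≤ ENNReal.ofReal Mb := ENNReal.ofReal_le_ofReal (hMb n)
    exact ne_top_of_le_ne_top ENNReal.ofReal_ne_top (ENNReal.tsum_le_of_sum_range_le hble)
  refine ⟨by simpa only [hνdef, hpdef] using part1, ?_, ?_⟩
  · -- Part 2 : a.e. convergence
    have hmg : ∀ k : ℕ, Measurable fun ω : ℕ → X => ENNReal.ofReal |f (ω k)| :=
      fun k => ENNReal.measurable_ofReal.comp ((hfm.comp (measurable_pi_apply k)).abs)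
    have hswap : (∑' k : ℕ, ν k / ENNReal.ofReal (((k : ℝ) + 1) ^ p))
        = ∫⁻ ω, ∑' k : ℕ, ENNReal.ofReal |f (ω k)|
            * (ENNReal.ofReal (((k : ℝ) + 1) ^ p))⁻¹ ∂M.law x := by
      have hstep : ∀ k : ℕ, ν k / ENNReal.ofReal (((k : ℝ) + 1) ^ p)
          = ∫⁻ ω, ENNReal.ofReal |f (ω k)|
              * (ENNReal.ofReal (((k : ℝ) + 1) ^ p))⁻¹ ∂M.law x := fun k => by
        rw [div_eq_mul_inv]
        exact (lintegral_mul_const _ (hmg k)).symm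
      rw [tsum_congr hstep,
        lintegral_tsum fun k => (((hmg k).mul_const _ : Measurable fun ω : ℕ → X =>
          ENNReal.ofReal |f (ω k)| * (ENNReal.ofReal (((k : ℝ) + 1) ^ p))⁻¹)).aemeasurable]
    have hfin : ∀ᵐ ω ∂M.law x,
        (∑' k : ℕ, ENNReal.ofReal |f (ω k)| * (ENNReal.ofReal (((k : ℝ) + 1) ^ p))⁻¹) < ⊤ :=
      ae_lt_top (Measurable.ennreal_tsum fun k => (hmg k).mul_const _)
        (by rw [← hswap]; exact part1)
    filter_upwards [hfin] with ω hω
    have hsummable : Summable fun k : ℕ => |f (ω k)| / ((k : ℝ) + 1) ^ p := by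
      have h1 : ∀ k : ℕ, ENNReal.ofReal |f (ω k)| * (ENNReal.ofReal (((k : ℝ) + 1) ^ p))⁻¹
          = ENNReal.ofReal (|f (ω k)| / ((k : ℝ) + 1) ^ p) := fun k => by
        rw [ENNReal.ofReal_div_of_pos (Real.rpow_pos_of_pos (by positivity) _), div_eq_mul_inv]
      have h2 : (∑' k : ℕ, ENNReal.ofReal (|f (ω k)| / ((k : ℝ) + 1) ^ p)) ≠ ⊤ := by
        rw [← tsum_congr h1]
        exact hω.ne
      refine (ENNReal.summable_toReal h2).congr fun k => ?_
      rw [ENNReal.toReal_ofReal (by positivity)]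
    have h4 : Tendsto (fun k : ℕ => |f (ω k)| / ((k : ℝ) + 1) ^ p) atTop (𝓝 0) :=
      hsummable.tendsto_atTop_zero
    rw [tendsto_zero_iff_abs_tendsto_zero]
    have h5 : Tendsto (fun k : ℕ => (2 : ℝ) ^ p * (|f (ω k)| / ((k : ℝ) + 1) ^ p))
        atTop (𝓝 0) := by
      simpa using h4.const_mul ((2 : ℝ) ^ p)
    apply squeeze_zero' (Eventually.of_forall fun n => abs_nonneg _) ?_ h5
    filter_upwards [eventually_ge_atTop 1] with n hn
    have hn1 : (1 : ℝ) ≤ (n : ℝ) := by exact_mod_cast hn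
    have hnp : (0 : ℝ) < (n : ℝ) ^ p := Real.rpow_pos_of_pos (by linarith) _
    have hn1p : (0 : ℝ) < ((n : ℝ) + 1) ^ p := Real.rpow_pos_of_pos (by linarith) _
    have key : ((n : ℝ) + 1) ^ p ≤ 2 ^ p * (n : ℝ) ^ p := by
      calc ((n : ℝ) + 1) ^ p ≤ (2 * (n : ℝ)) ^ p :=
            Real.rpow_le_rpow (by positivity) (by linarith) hp0.le
        _ = 2 ^ p * (n : ℝ) ^ p := Real.mul_rpow (by norm_num) (by positivity)
    calc |f (ω n) / (n : ℝ) ^ p| = |f (ω n)| / (n : ℝ) ^ p := by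
          rw [abs_div, abs_of_nonneg hnp.le]
      _ ≤ 2 ^ p * (|f (ω n)| / ((n : ℝ) + 1) ^ p) := by
          rw [mul_div_assoc', div_le_div_iff₀ hnp hn1p]
          calc |f (ω n)| * ((n : ℝ) + 1) ^ p ≤ |f (ω n)| * (2 ^ p * (n : ℝ) ^ p) :=
                mul_le_mul_of_nonneg_left key (abs_nonneg _)
            _ = 2 ^ p * |f (ω n)| * (n : ℝ) ^ p := by ring
  · -- Part 3 : L¹ convergence
    have hint : ∀ n : ℕ, (∫ ω, |f (ω n) / (n : ℝ) ^ p| ∂M.law x) = e n * ((n : ℝ) ^ p)⁻¹ := by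
      intro n
      have h1 : ∀ ω : ℕ → X, |f (ω n) / (n : ℝ) ^ p| = |f (ω n)| * ((n : ℝ) ^ p)⁻¹ := fun ω => by
        rw [abs_div, div_eq_mul_inv, abs_of_nonneg (Real.rpow_nonneg (Nat.cast_nonneg n) p)]
      simp_rw [h1]
      rw [integral_mul_const]
      congr 1
      rw [integral_eq_lintegral_of_nonneg_ae (Eventually.of_forall fun ω => abs_nonneg _)
        ((show Measurable fun ω : ℕ → X => |f (ω n)| from
          (hfm.comp (measurable_pi_apply n)).abs).aestronglyMeasurable)]
    have hb2 : ∀ n : ℕ, e n ≤ A * ((n : ℝ) + 2) := by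
      intro n
      have h1 : e n ≤ ∑ k ∈ Finset.range (n + 1), e k :=
        Finset.single_le_sum (fun k _ => hen k) (Finset.self_mem_range_succ n)
      have h2 := heE (n + 1)
      push_cast at h2
      linarith
    have hsq : Tendsto (fun n : ℕ => 3 * A * ((n : ℝ) ^ (-α))) atTop (𝓝 0) := by
      have h1 : Tendsto (fun n : ℕ => ((n : ℝ) ^ (-α))) atTop (𝓝 0) :=
        (tendsto_rpow_neg_atTop hα).comp tendsto_natCast_atTop_atTop
      simpa using h1.const_mul (3 * A)
    simp_rw [hint]
    apply squeeze_zero'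
      (Eventually.of_forall fun n => mul_nonneg (hen n) (by positivity)) ?_ hsq
    filter_upwards [eventually_ge_atTop 1] with n hn
    have hn1 : (1 : ℝ) ≤ (n : ℝ) := by exact_mod_cast hn
    have hn0 : (0 : ℝ) < (n : ℝ) := by linarith
    have key : (n : ℝ) ^ (-α) = (n : ℝ) * ((n : ℝ) ^ p)⁻¹ := by
      rw [show -α = 1 - p by rw [hpdef]; ring, Real.rpow_sub hn0, Real.rpow_one, div_eq_mul_inv]
    calc e n * ((n : ℝ) ^ p)⁻¹ ≤ (A * ((n : ℝ) + 2)) * ((n : ℝ) ^ p)⁻¹ :=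
          mul_le_mul_of_nonneg_right (hb2 n) (by positivity)
      _ ≤ (3 * A * (n : ℝ)) * ((n : ℝ) ^ p)⁻¹ := by
          apply mul_le_mul_of_nonneg_right ?_ (by positivity)
          nlinarith [mul_nonneg hAnn (by linarith : (0 : ℝ) ≤ (n : ℝ) - 1)]
      _ = 3 * A * ((n : ℝ) ^ (-α)) := by rw [key]; ring


end
end

section
/- (Lindeberg-type conditions under a drift function.) Let u be a drift function, α ∈ ℝ₊*, g ∈ 𝓔^{2+α}_u and x ∈ 𝐗 with u(x) < ∞. Then: (1) for every ε > 0, (1/n)·Σ_{k=0}^{n−1} 𝔼_x[(g(X_{k+1}) − Pg(X_k))²·𝟙_{|g(X_{k+1}) − Pg(X_k)| ≥ ε√n}] → 0 as n → ∞; (2) for every ε > 0, Σ_{n≥1} n^{−1/2}·𝔼_x[|g(X_{n+1}) − Pg(X_n)|·𝟙_{|g(X_{n+1}) − Pg(X_n)| ≥ ε√n}] < ∞; (3) there exists δ > 0 such that Σ_{n≥1} n^{−2}·𝔼_x[(g(X_{n+1}) − Pg(X_n))⁴·𝟙_{|g(X_{n+1}) − Pg(X_n)| ≤ δ√n}] <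 ∞. -/
open MeasureTheory Filter Set Topology
open scoped ENNReal NNReal ENat

noncomputable section

variable {X : Type*} [MeasurableSpace X]

/-! ### Auxiliary lemmas -/

/-- Summability criterion: if `W ≥ 0` has partial sums growing at most linearly, then
`∑ W n / n ^ s` converges for `s > 1`. -/
lemma summ_aux' {W : ℕ → ℝ} {A B s : ℝ} (hs : 1 < s) (hW : ∀ n, 0 ≤ W n)
    (hA : 0 ≤ A) (hB : 0 ≤ B)
    (hsum : ∀ N : ℕ, ∑ n ∈ Finset.range N, W n ≤ A + B * N) :
    Summable (fun n : ℕ => W n / (n : ℝ) ^ s) := by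
  have hs0 : 0 < s := lt_trans one_pos hs
  set F : ℕ → ℝ := fun m => 1 / (m : ℝ) ^ s with hF
  have hFpos : ∀ m : ℕ, 1 ≤ m → 0 < (m : ℝ) ^ s := by
    intro m hm
    exact Real.rpow_pos_of_pos (by exact_mod_cast hm) s
  have hFle1 : ∀ m : ℕ, 1 ≤ m → F m ≤ 1 := by
    intro m hm
    have h1 : (1 : ℝ) ≤ (m : ℝ) ^ s :=
      Real.one_le_rpow (by exact_mod_cast hm) hs0.le
    simpa [hF, one_div] using inv_le_one_of_one_le₀ h1
  have hFanti : ∀ m : ℕ, 1 ≤ m → F (m + 1) ≤ F m := by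
    intro m h
    apply one_div_le_one_div_of_le (hFpos m h)
    apply Real.rpow_le_rpow (by positivity) (by exact_mod_cast Nat.le_succ m) hs0.le
  -- partial sums of F are bounded by its tsum T
  have hTsummable : Summable F := by
    simpa [hF] using Real.summable_one_div_nat_rpow.2 hs
  set T : ℝ := ∑' n, F n with hT
  have hFnonneg : ∀ m, 0 ≤ F m := by
    intro m; rcases Nat.eq_zero_or_pos m with h|h
    · subst h; simp [hF, Real.zero_rpow (ne_of_gt hs0)]
    · exact le_of_lt (by simpa [hF] using one_div_pos.2 (hFpos m h))
  set c : ℕ → ℝ := fun m => F m - F (m + 1) with hc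
  have hcnn : ∀ m, 1 ≤ m → 0 ≤ c m := fun m hm => sub_nonneg.2 (hFanti m hm)
  set D : ℝ := A + A + B + B * (1 + (1 + T)) with hD
  apply summable_of_sum_range_le (c := D)
  · intro n
    rcases Nat.eq_zero_or_pos n with h|h
    · subst h; simp [Real.zero_rpow (ne_of_gt hs0)]
    · exact div_nonneg (hW n) (le_of_lt (hFpos n h))
  intro N
  rcases Nat.eq_zero_or_pos N with h|h
  · subst h
    simp only [Finset.range_zero, Finset.sum_empty]
    have hT0 : 0 ≤ T := tsum_nonneg hFnonneg
    positivity
  -- rewrite sum over Finset.range N as sum over Finset.Ico 1 N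
  have key : ∑ n ∈ Finset.range N, W n / (n:ℝ) ^ s = ∑ n ∈ Finset.Ico 1 N, W n * F n := by
    rw [Finset.range_eq_Ico, ← Finset.sum_Ico_consecutive _ (Nat.zero_le 1) h]
    simp [Real.zero_rpow (ne_of_gt hs0), hF, div_eq_mul_inv, mul_comm]
  rw [key]
  -- telescoping : for n ∈ Finset.Ico 1 N, F n = ∑_{m ∈ Finset.Ico n N} c m + F N
  have tele : ∀ n, n ≤ N → ∑ m ∈ Finset.Ico n N, c m = F n - F N := by
    intro n hn
    rw [Finset.sum_Ico_eq_sub _ hn, Finset.sum_range_sub' F, Finset.sum_range_sub' F]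
    ring
  have step1 : ∑ n ∈ Finset.Ico 1 N, W n * F n
      = ∑ n ∈ Finset.Ico 1 N, (∑ m ∈ Finset.Ico n N, W n * c m) + (∑ n ∈ Finset.Ico 1 N, W n) * F N := by
    rw [Finset.sum_mul, ← Finset.sum_add_distrib]
    apply Finset.sum_congr rfl
    intro n hn
    rw [← Finset.mul_sum, tele n (Finset.mem_Ico.1 hn).2.le]
    ring
  rw [step1, Finset.sum_Ico_Ico_comm]
  have hWsum : ∀ M : ℕ, ∑ n ∈ Finset.Ico 1 M, W n ≤ A + B * M := by
    intro M
    calc ∑ n ∈ Finset.Ico 1 M, W n ≤ ∑ n ∈ Finset.range M, W n := by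
          rcases le_or_gt 1 M with h1|h1
          · rw [Finset.range_eq_Ico, ← Finset.sum_Ico_consecutive _ (Nat.zero_le 1) h1]
            have : 0 ≤ ∑ n ∈ Finset.Ico 0 1, W n := Finset.sum_nonneg fun i _ => hW i
            linarith
          · interval_cases M <;> simp
      _ ≤ A + B * M := hsum M
  -- bound the double sum
  have hmain : ∑ m ∈ Finset.Ico 1 N, ∑ n ∈ Finset.Ico 1 (m+1), W n * c m
      ≤ A + B * (1 + (1 + T)) := by
    have h1 : ∀ m ∈ Finset.Ico 1 N, ∑ n ∈ Finset.Ico 1 (m+1), W n * c m ≤ (A + B * (m+1)) * c m := by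
      intro m hm
      rw [← Finset.sum_mul]
      apply mul_le_mul_of_nonneg_right _ (hcnn m (Finset.mem_Ico.1 hm).1)
      simpa using hWsum (m+1)
    calc ∑ m ∈ Finset.Ico 1 N, ∑ n ∈ Finset.Ico 1 (m+1), W n * c m
        ≤ ∑ m ∈ Finset.Ico 1 N, (A + B * (m+1)) * c m := Finset.sum_le_sum h1
      _ = A * ∑ m ∈ Finset.Ico 1 N, c m + B * ∑ m ∈ Finset.Ico 1 N, ((m:ℝ)+1) * c m := by
          rw [Finset.mul_sum, Finset.mul_sum, ← Finset.sum_add_distrib]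
          apply Finset.sum_congr rfl; intro m _; ring
      _ ≤ A * 1 + B * (1 + (1 + T)) := by
          have hcsum : ∑ m ∈ Finset.Ico 1 N, c m ≤ 1 := by
            rw [tele 1 h]
            have := hFnonneg N
            have := hFle1 1 le_rfl
            linarith
          have hmc : ∑ m ∈ Finset.Ico 1 N, ((m:ℝ)+1) * c m ≤ 1 + (1 + T) := by
            -- (m+1) c m = (G m - G (m+1)) + F m where G m = m * F m
            set G : ℕ → ℝ := fun m => (m : ℝ) * F m with hG
            have hid : ∀ m : ℕ, ((m:ℝ)+1) * c m = (G m - G (m+1)) + F m := by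
              intro m; simp only [hG, hc]; push_cast; ring
            have hGsum : ∑ m ∈ Finset.Ico 1 N, (G m - G (m+1)) ≤ 1 := by
              rw [Finset.sum_Ico_eq_sub _ h, Finset.sum_range_sub' G,
                Finset.sum_range_sub' G]
              have hGN : 0 ≤ (N:ℝ) * F N := mul_nonneg (by positivity) (hFnonneg N)
              have hF1 := hFle1 1 le_rfl
              simp only [hG]
              push_cast
              nlinarith [hFnonneg 0]
            have hFsum : ∑ m ∈ Finset.Ico 1 N, F m ≤ T :=
              le_trans (Finset.sum_le_sum_of_subset_of_nonneg
                (by intro i hi; simp at hi ⊢; omega)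
                  (fun i _ _ => hFnonneg i) : ∑ m ∈ Finset.Ico 1 N, F m ≤ ∑ m ∈ Finset.range N, F m)
                (Summable.sum_le_tsum _ (fun i _ => hFnonneg i) hTsummable)
            calc ∑ m ∈ Finset.Ico 1 N, ((m:ℝ)+1) * c m
                = ∑ m ∈ Finset.Ico 1 N, (G m - G (m+1)) + ∑ m ∈ Finset.Ico 1 N, F m := by
                  rw [← Finset.sum_add_distrib]; exact Finset.sum_congr rfl fun m _ => hid m
              _ ≤ 1 + T := add_le_add hGsum hFsum
              _ ≤ 1 + (1 + T) := by
                  have : 0 ≤ T := tsum_nonneg hFnonneg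
                  linarith [hFnonneg 0]
          have := mul_le_mul_of_nonneg_left hcsum hA
          have := mul_le_mul_of_nonneg_left hmc hB
          linarith
      _ = A + B * (1 + (1 + T)) := by ring
  have hlast : (∑ n ∈ Finset.Ico 1 N, W n) * F N ≤ A + B := by
    have h1 : (∑ n ∈ Finset.Ico 1 N, W n) ≤ A + B * N := hWsum N
    have h2 : 0 ≤ ∑ n ∈ Finset.Ico 1 N, W n := Finset.sum_nonneg fun i _ => hW i
    have h3 : F N ≤ 1 := hFle1 N h
    have h4 : 0 ≤ F N := hFnonneg N
    have h5 : (N : ℝ) * F N ≤ 1 := by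
      rw [hF]
      rw [mul_one_div, div_le_one (hFpos N h)]
      calc (N : ℝ) = (N:ℝ) ^ (1:ℝ) := by rw [Real.rpow_one]
        _ ≤ (N:ℝ) ^ s := Real.rpow_le_rpow_of_exponent_le (by exact_mod_cast h) hs.le
    calc (∑ n ∈ Finset.Ico 1 N, W n) * F N ≤ (A + B * N) * F N :=
          mul_le_mul_of_nonneg_right h1 h4
      _ = A * F N + B * ((N:ℝ) * F N) := by ring
      _ ≤ A * 1 + B * 1 := add_le_add (mul_le_mul_of_nonneg_left h3 hA)
          (mul_le_mul_of_nonneg_left h5 hB)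
      _ = A + B := by ring
  rw [hD]
  linarith


/-- The Markov chain as a kernel. -/
def Mker (M : MarkovChain X) : ProbabilityTheory.Kernel X (ℕ → X) :=
  ⟨M.law, M.meas_law⟩

lemma mker_isMarkov (M : MarkovChain X) : ProbabilityTheory.IsMarkovKernel (Mker M) :=
  ⟨M.prob⟩

lemma alg1 (E P rn K A B : ℝ) (hE : 0 < E) (hP : 0 < P) (hr : 0 < rn) :
    ((E * P)⁻¹ * K * (A + B * rn)) / rn
      = K / E * A * (rn * P)⁻¹ + K / E * B * P⁻¹ := by
  field_simp

lemma alg2 (E P Q V C : ℝ) (hE : 0 < E) (hP : 0 < P) (hQ : 0 < Q) :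
    ((E * P)⁻¹ * (C * V)) / Q = C / E * V / (P * Q) := by
  rw [inv_mul_eq_div, div_div, div_mul_eq_mul_div, div_div, mul_assoc]

lemma markov_shift (M : MarkovChain X) (x : X) (k : ℕ) {f : X → ℝ} (hf : Measurable f)
    (h0 : ∀ y, 0 ≤ f y) (hint : ∀ y, Integrable (fun ω => f (ω 1)) (M.law y)) :
    ∫⁻ ω, ENNReal.ofReal (f (ω (k + 1))) ∂M.law x
      = ∫⁻ ω, ENNReal.ofReal (Pr M f (ω k)) ∂M.law x := by
  have hmeas : Measurable fun η : ℕ → X => ENNReal.ofReal (f (η 1)) :=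
    ENNReal.measurable_ofReal.comp (hf.comp (measurable_pi_apply 1))
  have h := M.markov x k Set.univ MeasurableSet.univ
      (fun η => ENNReal.ofReal (f (η 1))) hmeas
  simp only [Measure.restrict_univ] at h
  calc ∫⁻ ω, ENNReal.ofReal (f (ω (k + 1))) ∂M.law x
      = ∫⁻ ω, ENNReal.ofReal (f ((fun j => ω (j + k)) 1)) ∂M.law x := by
        congr 1; ext ω
        show ENNReal.ofReal (f (ω (k + 1))) = ENNReal.ofReal (f (ω (1 + k)))
        rw [add_comm k 1]
    _ = ∫⁻ ω, ∫⁻ η, ENNReal.ofReal (f (η 1)) ∂M.law (ω k) ∂M.law x := h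
    _ = ∫⁻ ω, ENNReal.ofReal (Pr M f (ω k)) ∂M.law x := by
        congr 1; ext ω
        rw [← ofReal_integral_eq_lintegral_ofReal (hint (ω k)) (ae_of_all _ fun η => h0 (η 1))]
        rfl

/-- Lemma 3.4 (Lindeberg-type conditions): for a drift function `u`, `α > 0`,
`g ∈ 𝓔^{2+α}_u` and any `x`, writing `d_k = g(X_{k+1}) - Pg(X_k)`, we have:
`(1/n) ∑_{k<n} 𝔼_x(d_k² 𝟙_{|d_k| ≥ ε√n}) → 0`,
`∑_n n^{-1/2} 𝔼_x(|d_n| 𝟙_{|d_n| ≥ ε√n}) < ∞`, and there is `δ > 0` with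
`∑_n n^{-2} 𝔼_x(d_n⁴ 𝟙_{|d_n| ≤ δ√n}) < ∞`. -/
theorem stmt13 (M : MarkovChain X) (τ : (ℕ → X) → ℕ∞)
    (hst : IsPathStoppingTime τ) (hθ : ThetaCompatible M τ)
    (u : X → ℝ) (hu : IsDrift M τ u) (α : ℝ) (hα : 0 < α)
    (g : X → ℝ) (hg : MemWp (wE M u) (2 + α) g) (x : X)
    (d : ℕ → (ℕ → X) → ℝ) (hd : d = fun k ω => g (ω (k + 1)) - Pr M g (ω k)) :
    (∀ ε : ℝ, 0 < ε → Tendsto (fun n : ℕ =>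
        (∑ k ∈ Finset.range n,
          ∫ ω, (if ε * Real.sqrt n ≤ |d k ω| then d k ω ^ 2 else 0) ∂M.law x) / (n : ℝ))
        atTop (𝓝 0)) ∧
    (∀ ε : ℝ, 0 < ε → Summable (fun n : ℕ =>
        (∫ ω, (if ε * Real.sqrt n ≤ |d n ω| then |d n ω| else 0) ∂M.law x) /
          Real.sqrt n)) ∧
    (∃ δ : ℝ, 0 < δ ∧ Summable (fun n : ℕ =>
        (∫ ω, (if |d n ω| ≤ δ * Real.sqrt n then d n ω ^ 4 else 0) ∂M.law x) /
          (n : ℝ) ^ 2)) := by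
  classical
  obtain ⟨hgm, C₀, hC₀⟩ := hg
  set μ := M.law x with hμdef
  haveI : IsProbabilityMeasure μ := M.prob x
  have hum : Measurable u := hu.meas
  have hPum : Measurable (Pr M u) := measurable_Pr M hum
  have hPgm : Measurable (Pr M g) := measurable_Pr M hgm
  have hwm : Measurable (wE M u) := by
    have : wE M u = fun y => u y - Pr M u y + Bu M u := rfl
    rw [this]; exact (hum.sub hPum).add_const _
  -- basic inequalities
  have hPu1 : ∀ y, 1 ≤ Pr M u y := by
    intro y
    haveI := M.prob y
    calc (1:ℝ) = ∫ _ω, (1:ℝ) ∂M.law y := by simp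
      _ ≤ ∫ ω, u (ω 1) ∂M.law y :=
          integral_mono (integrable_const 1) (hu.int_one y) fun ω => hu.one_le _
  have hs₀le : ∀ y, Pr M u y - u y ≤ sSup (Set.range fun z => Pr M u z - u z) := fun y =>
    le_csSup hu.bdd ⟨y, rfl⟩
  have hBu : Bu M u = sSup (Set.range fun z => Pr M u z - u z) + 1 := rfl
  have hw1 : ∀ y, 1 ≤ wE M u y := by
    intro y
    have h1 := hs₀le y
    show 1 ≤ u y - Pr M u y + Bu M u
    rw [hBu]; linarith
  have hw0 : ∀ y, 0 ≤ wE M u y := fun y => le_trans zero_le_one (hw1 y)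
  set s' : ℝ := max (sSup (Set.range fun z => Pr M u z - u z)) 0 with hs'def
  have hPu_le : ∀ y, Pr M u y ≤ u y + s' := by
    intro y
    have h1 := hs₀le y
    have h2 : sSup (Set.range fun z => Pr M u z - u z) ≤ s' := le_max_left _ _
    linarith
  have hu0 : ∀ y, 0 ≤ u y := fun y => le_trans zero_le_one (hu.one_le y)
  have hPu0 : ∀ y, 0 ≤ Pr M u y := fun y => le_trans zero_le_one (hPu1 y)
  -- integrability at coordinate 1, arbitrary base point
  have hIPu1 : ∀ y, Integrable (fun ω => Pr M u (ω 1)) (M.law y) := by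
    intro y
    haveI := M.prob y
    have hbint : Integrable (fun ω => u (ω 1) + s') (M.law y) :=
      (hu.int_one y).add (integrable_const s')
    refine Integrable.mono' hbint
      ((hPum.comp (measurable_pi_apply 1)).aestronglyMeasurable) (ae_of_all _ fun ω => ?_)
    rw [Real.norm_eq_abs, abs_of_nonneg (hPu0 _)]
    exact hPu_le _
  have hIw1 : ∀ y, Integrable (fun ω => wE M u (ω 1)) (M.law y) := by
    intro y
    haveI := M.prob y
    have heq : (fun ω : ℕ → X => wE M u (ω 1))
        = fun ω => (u (ω 1) - Pr M u (ω 1)) + Bu M u := rfl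
    have h1 : Integrable (fun ω => u (ω 1) - Pr M u (ω 1)) (M.law y) :=
      (hu.int_one y).sub (hIPu1 y)
    have h2 : Integrable (fun ω => (u (ω 1) - Pr M u (ω 1)) + Bu M u) (M.law y) :=
      h1.add (integrable_const _)
    rw [heq]; exact h2
  -- integrability at every coordinate under μ
  have hIu : ∀ k, Integrable (fun ω => u (ω k)) μ := by
    intro k
    induction k with
    | zero =>
      have hmap := M.start x
      have h1 : Integrable u (Measure.dirac x) := by
        constructor
        · exact hum.aestronglyMeasurable
        · show ∫⁻ a, (‖u a‖₊ : ℝ≥0∞) ∂Measure.dirac x < ⊤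
          rw [lintegral_dirac' x (hum.nnnorm.coe_nnreal_ennreal)]
          exact ENNReal.coe_lt_top
      rw [← hmap] at h1
      have h2 := (integrable_map_measure hum.aestronglyMeasurable
        (measurable_pi_apply 0).aemeasurable).1 h1
      exact h2
    | succ k ih =>
      constructor
      · exact (hum.comp (measurable_pi_apply (k+1))).aestronglyMeasurable
      · rw [hasFiniteIntegral_iff_ofReal (ae_of_all _ fun ω => hu0 _)]
        rw [markov_shift M x k hum hu0 hu.int_one]
        have hb : ∀ ω : ℕ → X, ENNReal.ofReal (Pr M u (ω k))
            ≤ ENNReal.ofReal (u (ω k)) + ENNReal.ofReal s' :=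
          fun ω => le_trans (ENNReal.ofReal_le_ofReal (hPu_le (ω k))) ENNReal.ofReal_add_le
        have h1 : ∫⁻ ω, ENNReal.ofReal (u (ω k)) ∂μ < ⊤ := by
          rw [← hasFiniteIntegral_iff_ofReal (ae_of_all _ fun ω => hu0 _)]
          exact ih.hasFiniteIntegral
        calc ∫⁻ ω, ENNReal.ofReal (Pr M u (ω k)) ∂μ
            ≤ ∫⁻ ω, (ENNReal.ofReal (u (ω k)) + ENNReal.ofReal s') ∂μ := lintegral_mono hb
          _ = ∫⁻ ω, ENNReal.ofReal (u (ω k)) ∂μ + ENNReal.ofReal s' * μ Set.univ := by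
              rw [lintegral_add_right _ measurable_const, lintegral_const]
          _ < ⊤ := by
              rw [measure_univ, mul_one]
              exact ENNReal.add_lt_top.2 ⟨h1, ENNReal.ofReal_lt_top⟩
  have hIPu : ∀ k, Integrable (fun ω => Pr M u (ω k)) μ := by
    intro k
    have hbint : Integrable (fun ω => u (ω k) + s') μ :=
      (hIu k).add (integrable_const s')
    refine Integrable.mono' hbint
      ((hPum.comp (measurable_pi_apply k)).aestronglyMeasurable) (ae_of_all _ fun ω => ?_)
    rw [Real.norm_eq_abs, abs_of_nonneg (hPu0 _)]
    exact hPu_le _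
  have hIw : ∀ k, Integrable (fun ω => wE M u (ω k)) μ := by
    intro k
    have heq : (fun ω : ℕ → X => wE M u (ω k))
        = fun ω => (u (ω k) - Pr M u (ω k)) + Bu M u := rfl
    have h1 : Integrable (fun ω => u (ω k) - Pr M u (ω k)) μ :=
      (hIu k).sub (hIPu k)
    have h2 : Integrable (fun ω => (u (ω k) - Pr M u (ω k)) + Bu M u) μ :=
      h1.add (integrable_const _)
    rw [heq]; exact h2
  -- telescoping
  set U : ℕ → ℝ := fun k => ∫ ω, u (ω k) ∂μ with hUdef
  set W : ℕ → ℝ := fun k => ∫ ω, wE M u (ω k) ∂μ with hWdef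
  have hU0 : U 0 = u x := by
    have hmap := M.start x
    calc U 0 = ∫ y, u y ∂(μ.map (fun ω => ω 0)) :=
        (integral_map (measurable_pi_apply 0).aemeasurable hum.aestronglyMeasurable).symm
      _ = ∫ y, u y ∂(Measure.dirac x) := by rw [hmap]
      _ = u x := integral_dirac' u x hum.stronglyMeasurable
  have hUnn : ∀ k, 0 ≤ U k := fun k => integral_nonneg fun ω => hu0 _
  have hUstep : ∀ k, ∫ ω, Pr M u (ω k) ∂μ = U (k + 1) := by
    intro k
    have h1 := ofReal_integral_eq_lintegral_ofReal (hIPu k) (ae_of_all _ fun ω => hPu0 _)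
    have h2 := ofReal_integral_eq_lintegral_ofReal (hIu (k+1)) (ae_of_all _ fun ω => hu0 _)
    have h3 := markov_shift M x k hum hu0 hu.int_one
    have h4 : ENNReal.ofReal (∫ ω, Pr M u (ω k) ∂μ) = ENNReal.ofReal (U (k+1)) := by
      rw [h1, h2, h3]
    exact (ENNReal.ofReal_eq_ofReal_iff (integral_nonneg fun ω => hPu0 _) (hUnn (k+1))).1 h4
  have hWtel : ∀ k, W k = U k - U (k+1) + Bu M u := by
    intro k
    have heq : (fun ω : ℕ → X => wE M u (ω k))
        = fun ω => (u (ω k) - Pr M u (ω k)) + Bu M u := rfl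
    show ∫ ω, wE M u (ω k) ∂μ = U k - U (k+1) + Bu M u
    have h1 : Integrable (fun ω => u (ω k) - Pr M u (ω k)) μ :=
      (hIu k).sub (hIPu k)
    rw [heq, integral_add h1 (integrable_const _),
      integral_sub (hIu k) (hIPu k), integral_const, hUstep k]
    simp [measure_univ]
    rfl
  have hWnn : ∀ k, 0 ≤ W k := fun k => integral_nonneg fun ω => hw0 _
  set B₀ : ℝ := max (Bu M u) 0 with hB₀def
  have hB₀0 : 0 ≤ B₀ := le_max_right _ _
  have hux0 : 0 ≤ u x := hu0 x
  have hWsum : ∀ N : ℕ, ∑ k ∈ Finset.range N, W k ≤ u x + B₀ * N := by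
    intro N
    have h1 : ∑ k ∈ Finset.range N, W k
        = (U 0 - U N) + (N : ℝ) * Bu M u := by
      calc ∑ k ∈ Finset.range N, W k
          = ∑ k ∈ Finset.range N, ((U k - U (k+1)) + Bu M u) :=
            Finset.sum_congr rfl fun k _ => hWtel k
        _ = (∑ k ∈ Finset.range N, (U k - U (k+1))) + (N : ℝ) * Bu M u := by
            rw [Finset.sum_add_distrib, Finset.sum_const, Finset.card_range,
              nsmul_eq_mul]
        _ = (U 0 - U N) + (N : ℝ) * Bu M u := by rw [Finset.sum_range_sub' U]
    rw [h1, hU0]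
    have h2 : (N : ℝ) * Bu M u ≤ (N : ℝ) * B₀ :=
      mul_le_mul_of_nonneg_left (le_max_left _ _) (Nat.cast_nonneg N)
    have h3 := hUnn N
    have h4 : (N:ℝ) * B₀ = B₀ * N := mul_comm _ _
    linarith
  -- exponents
  set β : ℝ := min α 2 with hβdef
  have hβ0 : 0 < β := lt_min hα two_pos
  have hβ2 : β ≤ 2 := min_le_right _ _
  have hβα : β ≤ α := min_le_left _ _
  set q : ℝ := 2 + β with hqdef
  have hq0 : 0 < q := by positivity
  set p : ℝ := 1 / q with hpdef
  have hp0 : 0 < p := by positivity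
  have hpq : p * q = 1 := one_div_mul_cancel (ne_of_gt hq0)
  have hp1 : p ≤ 1 := by
    rw [hpdef, div_le_one hq0]; linarith
  have hple : 1 / (2 + α) ≤ p := by
    rw [hpdef]
    apply one_div_le_one_div_of_le hq0
    rw [hqdef]; linarith
  -- the bound on g
  set Cg : ℝ := max C₀ 1 with hCgdef
  have hCg1 : (1:ℝ) ≤ Cg := le_max_right _ _
  have hCg0 : 0 < Cg := lt_of_lt_of_le one_pos hCg1
  have hgb : ∀ y, |g y| ≤ Cg * wE M u y ^ p := by
    intro y
    calc |g y| ≤ C₀ * wE M u y ^ (1/(2+α)) := hC₀ y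
      _ ≤ Cg * wE M u y ^ (1/(2+α)) :=
          mul_le_mul_of_nonneg_right (le_max_left _ _) (Real.rpow_nonneg (hw0 y) _)
      _ ≤ Cg * wE M u y ^ p :=
          mul_le_mul_of_nonneg_left
            (Real.rpow_le_rpow_of_exponent_le (hw1 y) hple) hCg0.le
  have hwple : ∀ y, wE M u y ^ p ≤ wE M u y := by
    intro y
    calc wE M u y ^ p ≤ wE M u y ^ (1:ℝ) :=
        Real.rpow_le_rpow_of_exponent_le (hw1 y) hp1
      _ = wE M u y := Real.rpow_one _
  -- P(w) bound
  obtain ⟨C₂, hC₂⟩ := hu.pw_bdd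
  set C₂' : ℝ := max C₂ 1 with hC₂'def
  have hC₂'0 : 0 < C₂' := lt_of_lt_of_le one_pos (le_max_right _ _)
  have hPw_le : ∀ y, Pr M (wE M u) y ≤ C₂' * wE M u y := fun y =>
    le_trans (hC₂ y) (mul_le_mul_of_nonneg_right (le_max_left _ _) (hw0 y))
  have hPw1 : ∀ y, 1 ≤ Pr M (wE M u) y := by
    intro y
    haveI := M.prob y
    calc (1:ℝ) = ∫ _ω, (1:ℝ) ∂M.law y := by simp
      _ ≤ ∫ ω, wE M u (ω 1) ∂M.law y :=
          integral_mono (integrable_const 1) (hIw1 y) fun ω => hw1 _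
  have hIwp1 : ∀ y, Integrable (fun ω => wE M u (ω 1) ^ p) (M.law y) := by
    intro y
    refine Integrable.mono' (hIw1 y)
      (((Real.continuous_rpow_const hp0.le).measurable.comp
        (hwm.comp (measurable_pi_apply 1))).aestronglyMeasurable)
      (ae_of_all _ fun ω => ?_)
    rw [Real.norm_eq_abs, abs_of_nonneg (Real.rpow_nonneg (hw0 _) _)]
    exact hwple _
  -- Jensen's inequality for the concave map t ↦ t ^ p
  have hJensen : ∀ y, ∫ ω, wE M u (ω 1) ^ p ∂M.law y ≤ Pr M (wE M u) y ^ p := by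
    intro y
    haveI := M.prob y
    set S : ℝ := Pr M (wE M u) y with hSdef
    have hS1 : 1 ≤ S := hPw1 y
    have hS0 : 0 < S := lt_of_lt_of_le one_pos hS1
    have hpt : ∀ ω : ℕ → X,
        wE M u (ω 1) ^ p ≤ (p * wE M u (ω 1) + (1 - p) * S) * S ^ (p - 1) := by
      intro ω
      have hgm2 := Real.geom_mean_le_arith_mean2_weighted hp0.le
        (by linarith : (0:ℝ) ≤ 1 - p) (hw0 (ω 1)) hS0.le (by ring)
      have hSpow : S ^ (1 - p) * S ^ (p - 1) = 1 := by
        rw [← Real.rpow_add hS0]; norm_num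
      have h2 := mul_le_mul_of_nonneg_right hgm2
        (le_of_lt (Real.rpow_pos_of_pos hS0 (p-1)))
      calc wE M u (ω 1) ^ p
          = wE M u (ω 1) ^ p * (S ^ (1-p) * S ^ (p-1)) := by rw [hSpow, mul_one]
        _ = wE M u (ω 1) ^ p * S ^ (1-p) * S ^ (p-1) := by ring
        _ ≤ (p * wE M u (ω 1) + (1 - p) * S) * S ^ (p-1) := h2
    have hint : Integrable (fun ω => (p * wE M u (ω 1) + (1 - p) * S) * S ^ (p - 1))
        (M.law y) :=
      (((hIw1 y).const_mul p).add (integrable_const ((1 - p) * S))).mul_const _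
    calc ∫ ω, wE M u (ω 1) ^ p ∂M.law y
        ≤ ∫ ω, (p * wE M u (ω 1) + (1 - p) * S) * S ^ (p - 1) ∂M.law y :=
          integral_mono_of_nonneg (ae_of_all _ fun ω => Real.rpow_nonneg (hw0 _) p)
            hint (ae_of_all _ hpt)
      _ = (p * S + (1 - p) * S) * S ^ (p - 1) := by
          have hSint : ∫ ω, wE M u (ω 1) ∂M.law y = S := rfl
          rw [integral_mul_const, integral_add ((hIw1 y).const_mul p) (integrable_const _),
            integral_const_mul, integral_const, hSint]
          simp [measure_univ]
      _ = S ^ (1:ℝ) * S ^ (p - 1) := by rw [Real.rpow_one]; ring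
      _ = S ^ p := by rw [← Real.rpow_add hS0]; norm_num
  have hIg1 : ∀ y, Integrable (fun ω => g (ω 1)) (M.law y) := by
    intro y
    refine Integrable.mono' ((hIw1 y).const_mul Cg)
      ((hgm.comp (measurable_pi_apply 1)).aestronglyMeasurable) (ae_of_all _ fun ω => ?_)
    rw [Real.norm_eq_abs]
    calc |g (ω 1)| ≤ Cg * wE M u (ω 1) ^ p := hgb _
      _ ≤ Cg * wE M u (ω 1) := mul_le_mul_of_nonneg_left (hwple _) hCg0.le
  have hPgb : ∀ y, |Pr M g y| ≤ Cg * C₂' ^ p * wE M u y ^ p := by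
    intro y
    calc |Pr M g y| ≤ ∫ ω, |g (ω 1)| ∂M.law y := by
          simpa [Real.norm_eq_abs, Pr] using
            norm_integral_le_integral_norm (μ := M.law y) (fun ω => g (ω 1))
      _ ≤ ∫ ω, Cg * wE M u (ω 1) ^ p ∂M.law y :=
          integral_mono (hIg1 y).abs ((hIwp1 y).const_mul Cg) fun ω => hgb _
      _ = Cg * ∫ ω, wE M u (ω 1) ^ p ∂M.law y := integral_const_mul _ _
      _ ≤ Cg * Pr M (wE M u) y ^ p := mul_le_mul_of_nonneg_left (hJensen y) hCg0.le
      _ ≤ Cg * (C₂' * wE M u y) ^ p := mul_le_mul_of_nonneg_left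
          (Real.rpow_le_rpow (le_trans zero_le_one (hPw1 y)) (hPw_le y) hp0.le) hCg0.le
      _ = Cg * C₂' ^ p * wE M u y ^ p := by
          rw [Real.mul_rpow hC₂'0.le (hw0 y)]; ring
  -- the moment bound
  set CC : ℝ := Cg + Cg * C₂' ^ p with hCCdef
  have hCC0 : 0 < CC := by
    have : 0 < Cg * C₂' ^ p := mul_pos hCg0 (Real.rpow_pos_of_pos hC₂'0 p)
    linarith
  have habs : ∀ k ω, |d k ω| ≤ CC * (wE M u (ω k) + wE M u (ω (k+1))) ^ p := by
    intro k ω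
    have ht0 : (0:ℝ) ≤ wE M u (ω k) + wE M u (ω (k+1)) := add_nonneg (hw0 _) (hw0 _)
    have h1 : wE M u (ω (k+1)) ^ p ≤ (wE M u (ω k) + wE M u (ω (k+1))) ^ p :=
      Real.rpow_le_rpow (hw0 _) (le_add_of_nonneg_left (hw0 _)) hp0.le
    have h2 : wE M u (ω k) ^ p ≤ (wE M u (ω k) + wE M u (ω (k+1))) ^ p :=
      Real.rpow_le_rpow (hw0 _) (le_add_of_nonneg_right (hw0 _)) hp0.le
    rw [hd]
    calc |g (ω (k+1)) - Pr M g (ω k)| ≤ |g (ω (k+1))| + |Pr M g (ω k)| := abs_sub _ _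
      _ ≤ Cg * wE M u (ω (k+1)) ^ p + Cg * C₂' ^ p * wE M u (ω k) ^ p :=
          add_le_add (hgb _) (hPgb _)
      _ ≤ Cg * (wE M u (ω k) + wE M u (ω (k+1))) ^ p
          + Cg * C₂' ^ p * (wE M u (ω k) + wE M u (ω (k+1))) ^ p :=
          add_le_add (mul_le_mul_of_nonneg_left h1 hCg0.le)
            (mul_le_mul_of_nonneg_left h2 (by positivity))
      _ = CC * (wE M u (ω k) + wE M u (ω (k+1))) ^ p := by rw [hCCdef]; ring
  have hdq : ∀ k ω, |d k ω| ^ q ≤ CC ^ q * (wE M u (ω k) + wE M u (ω (k+1))) := by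
    intro k ω
    have ht0 : (0:ℝ) ≤ wE M u (ω k) + wE M u (ω (k+1)) := add_nonneg (hw0 _) (hw0 _)
    calc |d k ω| ^ q ≤ (CC * (wE M u (ω k) + wE M u (ω (k+1))) ^ p) ^ q :=
        Real.rpow_le_rpow (abs_nonneg _) (habs k ω) hq0.le
      _ = CC ^ q * ((wE M u (ω k) + wE M u (ω (k+1))) ^ p) ^ q :=
        Real.mul_rpow hCC0.le (Real.rpow_nonneg ht0 _)
      _ = CC ^ q * (wE M u (ω k) + wE M u (ω (k+1))) ^ (p * q) := by
        rw [← Real.rpow_mul ht0]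
      _ = CC ^ q * (wE M u (ω k) + wE M u (ω (k+1))) := by rw [hpq, Real.rpow_one]
  have hdmeas : ∀ k, Measurable (d k) := by
    intro k; rw [hd]
    exact (hgm.comp (measurable_pi_apply (k+1))).sub (hPgm.comp (measurable_pi_apply k))
  have hIdq : ∀ k, Integrable (fun ω => |d k ω| ^ q) μ := by
    intro k
    refine Integrable.mono' (((hIw k).add (hIw (k+1))).const_mul (CC ^ q))
      (((Real.continuous_rpow_const hq0.le).measurable.comp
        (hdmeas k).abs).aestronglyMeasurable) (ae_of_all _ fun ω => ?_)
    rw [Real.norm_eq_abs, abs_of_nonneg (Real.rpow_nonneg (abs_nonneg _) _)]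
    exact hdq k ω
  have hEkb : ∀ k, ∫ ω, |d k ω| ^ q ∂μ ≤ CC ^ q * (W k + W (k+1)) := by
    intro k
    calc ∫ ω, |d k ω| ^ q ∂μ
        ≤ ∫ ω, CC ^ q * (wE M u (ω k) + wE M u (ω (k+1))) ∂μ :=
          integral_mono (hIdq k) (((hIw k).add (hIw (k+1))).const_mul _) (hdq k)
      _ = CC ^ q * (W k + W (k+1)) := by
          rw [integral_const_mul, integral_add (hIw k) (hIw (k+1))]
  -- master bound for truncated integrals
  have hmaster : ∀ (k : ℕ) (c : ℝ), 0 ≤ c → ∀ h : (ℕ → X) → ℝ, (∀ ω, 0 ≤ h ω) →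
      (∀ ω, h ω ≤ c * |d k ω| ^ q) →
      ∫ ω, h ω ∂μ ≤ c * (CC ^ q * (W k + W (k+1))) := by
    intro k c hc h h0 hle
    calc ∫ ω, h ω ∂μ ≤ ∫ ω, c * |d k ω| ^ q ∂μ :=
        integral_mono_of_nonneg (ae_of_all _ h0) ((hIdq k).const_mul c) (ae_of_all _ hle)
      _ = c * ∫ ω, |d k ω| ^ q ∂μ := integral_const_mul _ _
      _ ≤ c * (CC ^ q * (W k + W (k+1))) := mul_le_mul_of_nonneg_left (hEkb k) hc
  -- partial sums of V
  set A' : ℝ := 2 * u x + B₀ with hA'def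
  set B' : ℝ := 2 * B₀ with hB'def
  have hA'0 : 0 ≤ A' := by positivity
  have hB'0 : 0 ≤ B' := by positivity
  have hVsum : ∀ N : ℕ, ∑ k ∈ Finset.range N, (W k + W (k+1)) ≤ A' + B' * N := by
    intro N
    rw [Finset.sum_add_distrib]
    have h2 : ∑ k ∈ Finset.range N, W (k+1) ≤ ∑ k ∈ Finset.range (N+1), W k := by
      rw [Finset.sum_range_succ' W N]
      linarith [hWnn 0]
    have h3 := hWsum N
    have h4 := hWsum (N+1)
    have h5 : ∑ k ∈ Finset.range (N+1), W k ≤ u x + B₀ * N + B₀ := by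
      push_cast at h4; linarith
    rw [hA'def, hB'def]
    linarith
  -- nonnegativity of the truncated integrals
  have hitenn2 : ∀ (n : ℕ) (ε : ℝ),
      0 ≤ ∫ ω, (if ε * Real.sqrt n ≤ |d n ω| then |d n ω| else 0) ∂μ := by
    intro n ε
    apply integral_nonneg
    intro ω
    dsimp only
    split
    · exact abs_nonneg _
    · exact le_rfl
    -- comparison majorant summability
  have hs1 : (1:ℝ) < 1 + β/2 := by linarith
  have hcmp : ∀ K : ℝ, 0 ≤ K →
      Summable (fun n : ℕ => K * (W n + W (n+1)) / (n:ℝ) ^ (1 + β/2)) := by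
    intro K hK
    apply summ_aux' hs1
      (fun n => mul_nonneg hK (add_nonneg (hWnn n) (hWnn (n+1))))
      (mul_nonneg hK hA'0) (mul_nonneg hK hB'0)
    intro N
    rw [← Finset.mul_sum]
    calc K * ∑ k ∈ Finset.range N, (W k + W (k+1)) ≤ K * (A' + B' * N) :=
        mul_le_mul_of_nonneg_left (hVsum N) hK
      _ = K * A' + K * B' * N := by ring
  have hsβ : (0:ℝ) < 1 + β/2 := by linarith
  refine ⟨?_, ?_, ?_⟩
  · -- part 1
    intro ε hε
    set c01 : ℝ := CC ^ q / ε ^ β * A' with hc01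
    set c02 : ℝ := CC ^ q / ε ^ β * B' with hc02
    have hεβ : 0 < ε ^ β := Real.rpow_pos_of_pos hε β
    have hc010 : 0 ≤ c01 := by positivity
    have hc020 : 0 ≤ c02 := by positivity
    have hlow : ∀ n : ℕ, 0 ≤ (∑ k ∈ Finset.range n,
        ∫ ω, (if ε * Real.sqrt n ≤ |d k ω| then d k ω ^ 2 else 0) ∂μ) / (n:ℝ) := by
      intro n
      apply div_nonneg _ (Nat.cast_nonneg n)
      apply Finset.sum_nonneg
      intro k _
      apply integral_nonneg
      intro ω
      dsimp only
      split
      · positivity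
      · exact le_rfl
    have hupper : ∀ n : ℕ, 1 ≤ n → (∑ k ∈ Finset.range n,
        ∫ ω, (if ε * Real.sqrt n ≤ |d k ω| then d k ω ^ 2 else 0) ∂μ) / (n:ℝ)
        ≤ c01 * (n:ℝ) ^ (-(1 + β/2)) + c02 * (n:ℝ) ^ (-(β/2)) := by
      intro n hn
      have hrn0 : (0:ℝ) < (n:ℝ) := by exact_mod_cast hn
      set a : ℝ := ε * Real.sqrt n with hadef
      have ha0 : 0 < a := mul_pos hε (Real.sqrt_pos.2 hrn0)
      have haβ : 0 < a ^ β := Real.rpow_pos_of_pos ha0 β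
      have hptw : ∀ (k : ℕ) (ω : ℕ → X),
          (if a ≤ |d k ω| then d k ω ^ 2 else 0) ≤ (a ^ β)⁻¹ * |d k ω| ^ q := by
        intro k ω
        split
        case isTrue hcase =>
          have hd0 : 0 < |d k ω| := lt_of_lt_of_le ha0 hcase
          have h2 : |d k ω| ^ q = d k ω ^ 2 * |d k ω| ^ β := by
            rw [hqdef, Real.rpow_add hd0,
              show (2:ℝ) = ((2:ℕ):ℝ) by norm_num, Real.rpow_natCast, sq_abs]
          rw [inv_mul_eq_div, le_div_iff₀ haβ, h2]
          exact mul_le_mul_of_nonneg_left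
            (Real.rpow_le_rpow ha0.le hcase hβ0.le) (by positivity)
        case isFalse =>
          positivity
      have hIn : ∀ k : ℕ, ∫ ω, (if a ≤ |d k ω| then d k ω ^ 2 else 0) ∂μ
          ≤ (a ^ β)⁻¹ * (CC ^ q * (W k + W (k+1))) := by
        intro k
        apply hmaster k _ (by positivity)
        · intro ω; split
          · positivity
          · exact le_rfl
        · exact hptw k
      have hsum1 : ∑ k ∈ Finset.range n, ∫ ω, (if a ≤ |d k ω| then d k ω ^ 2 else 0) ∂μ
          ≤ (a ^ β)⁻¹ * CC ^ q * (A' + B' * n) := by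
        calc ∑ k ∈ Finset.range n, ∫ ω, (if a ≤ |d k ω| then d k ω ^ 2 else 0) ∂μ
            ≤ ∑ k ∈ Finset.range n, (a ^ β)⁻¹ * (CC ^ q * (W k + W (k+1))) :=
              Finset.sum_le_sum fun k _ => hIn k
          _ = ∑ k ∈ Finset.range n, ((a ^ β)⁻¹ * CC ^ q) * (W k + W (k+1)) := by
              apply Finset.sum_congr rfl; intro k _; ring
          _ = (a ^ β)⁻¹ * CC ^ q * ∑ k ∈ Finset.range n, (W k + W (k+1)) := by
              rw [← Finset.mul_sum]
          _ ≤ (a ^ β)⁻¹ * CC ^ q * (A' + B' * n) := by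
              apply mul_le_mul_of_nonneg_left (hVsum n) (by positivity)
      have haβeq : a ^ β = ε ^ β * (n:ℝ) ^ ((1/2) * β) := by
        rw [hadef, Real.mul_rpow hε.le (Real.sqrt_nonneg _), Real.sqrt_eq_rpow,
          ← Real.rpow_mul hrn0.le]
      have hdiv : ((a ^ β)⁻¹ * CC ^ q * (A' + B' * n)) / (n:ℝ)
          = c01 * (n:ℝ) ^ (-(1 + β/2)) + c02 * (n:ℝ) ^ (-(β/2)) := by
        rw [haβeq, hc01, hc02, Real.rpow_neg hrn0.le, Real.rpow_neg hrn0.le]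
        have e1 : (0:ℝ) < (n:ℝ) ^ ((1/2) * β) := Real.rpow_pos_of_pos hrn0 _
        have e2 : (0:ℝ) < (n:ℝ) ^ (1 + β/2) := Real.rpow_pos_of_pos hrn0 _
        have e3 : (0:ℝ) < (n:ℝ) ^ (β/2) := Real.rpow_pos_of_pos hrn0 _
        have hsplit : (n:ℝ) ^ (1 + β/2) = (n:ℝ) * (n:ℝ) ^ ((1/2) * β) := by
          rw [show (1:ℝ) + β/2 = 1 + (1/2)*β by ring, Real.rpow_add hrn0,
            Real.rpow_one]
        have hsplit2 : (n:ℝ) ^ (β/2) = (n:ℝ) ^ ((1/2) * β) := by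
          congr 1; ring
        rw [hsplit, hsplit2]
        exact alg1 _ _ _ _ _ _ hεβ e1 hrn0
      calc (∑ k ∈ Finset.range n,
            ∫ ω, (if a ≤ |d k ω| then d k ω ^ 2 else 0) ∂μ) / (n:ℝ)
          ≤ ((a ^ β)⁻¹ * CC ^ q * (A' + B' * n)) / (n:ℝ) := by
            rw [div_eq_mul_inv, div_eq_mul_inv]
            exact mul_le_mul_of_nonneg_right hsum1 (by positivity)
        _ = c01 * (n:ℝ) ^ (-(1 + β/2)) + c02 * (n:ℝ) ^ (-(β/2)) := hdiv
    have hlim : Tendsto (fun n : ℕ =>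
        c01 * (n:ℝ) ^ (-(1 + β/2)) + c02 * (n:ℝ) ^ (-(β/2))) atTop (𝓝 0) := by
      have t1 : Tendsto (fun n : ℕ => ((n:ℝ)) ^ (-(1 + β/2))) atTop (𝓝 0) :=
        (tendsto_rpow_neg_atTop hsβ).comp tendsto_natCast_atTop_atTop
      have t2 : Tendsto (fun n : ℕ => ((n:ℝ)) ^ (-(β/2))) atTop (𝓝 0) :=
        (tendsto_rpow_neg_atTop (by linarith)).comp tendsto_natCast_atTop_atTop
      simpa using (t1.const_mul c01).add (t2.const_mul c02)
    apply tendsto_of_tendsto_of_tendsto_of_le_of_le' tendsto_const_nhds hlim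
    · exact Eventually.of_forall hlow
    · filter_upwards [eventually_ge_atTop 1] with n hn
      exact hupper n hn
  · -- part 2
    intro ε hε
    set K : ℝ := CC ^ q / ε ^ (1 + β) with hKdef
    have hε1β : 0 < ε ^ (1 + β) := Real.rpow_pos_of_pos hε _
    have hK0 : 0 ≤ K := by positivity
    apply Summable.of_nonneg_of_le _ _ (hcmp K hK0)
    · intro n
      exact div_nonneg (hitenn2 n ε) (Real.sqrt_nonneg _)
    · intro n
      rcases Nat.eq_zero_or_pos n with hn | hn
      · subst hn
        simp [Real.sqrt_zero, Real.zero_rpow (ne_of_gt hsβ)]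
      · have hrn0 : (0:ℝ) < (n:ℝ) := by exact_mod_cast hn
        set a : ℝ := ε * Real.sqrt n with hadef
        have ha0 : 0 < a := mul_pos hε (Real.sqrt_pos.2 hrn0)
        have ha1β : 0 < a ^ (1 + β) := Real.rpow_pos_of_pos ha0 _
        have hptw : ∀ ω : ℕ → X,
            (if a ≤ |d n ω| then |d n ω| else 0) ≤ (a ^ (1+β))⁻¹ * |d n ω| ^ q := by
          intro ω
          split
          case isTrue hcase =>
            have hd0 : 0 < |d n ω| := lt_of_lt_of_le ha0 hcase
            have h2 : |d n ω| ^ q = |d n ω| * |d n ω| ^ (1+β) := by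
              have hq1 : q = 1 + (1 + β) := by rw [hqdef]; ring
              rw [hq1, Real.rpow_add hd0, Real.rpow_one]
            rw [inv_mul_eq_div, le_div_iff₀ ha1β, h2]
            exact mul_le_mul_of_nonneg_left
              (Real.rpow_le_rpow ha0.le hcase (by linarith)) (abs_nonneg _)
          case isFalse =>
            positivity
        have hIn : ∫ ω, (if a ≤ |d n ω| then |d n ω| else 0) ∂μ
            ≤ (a ^ (1+β))⁻¹ * (CC ^ q * (W n + W (n+1))) := by
          apply hmaster n _ (by positivity)
          · intro ω; split
            · exact abs_nonneg _
            · exact le_rfl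
          · exact hptw
        have ha1βeq : a ^ (1+β) = ε ^ (1+β) * (n:ℝ) ^ ((1/2) * (1+β)) := by
          rw [hadef, Real.mul_rpow hε.le (Real.sqrt_nonneg _), Real.sqrt_eq_rpow,
            ← Real.rpow_mul hrn0.le]
        have hsq : Real.sqrt n = (n:ℝ) ^ ((1:ℝ)/2) := Real.sqrt_eq_rpow _
        have hdiv : ((a ^ (1+β))⁻¹ * (CC ^ q * (W n + W (n+1)))) / Real.sqrt n
            = K * (W n + W (n+1)) / (n:ℝ) ^ (1 + β/2) := by
          rw [ha1βeq, hsq, hKdef]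
          have e1 : (0:ℝ) < (n:ℝ) ^ ((1/2) * (1+β)) := Real.rpow_pos_of_pos hrn0 _
          have e2 : (0:ℝ) < (n:ℝ) ^ ((1:ℝ)/2) := Real.rpow_pos_of_pos hrn0 _
          have hsplit : (n:ℝ) ^ (1 + β/2)
              = (n:ℝ) ^ ((1/2) * (1+β)) * (n:ℝ) ^ ((1:ℝ)/2) := by
            rw [← Real.rpow_add hrn0]; congr 1; ring
          rw [hsplit]
          exact alg2 _ _ _ _ _ hε1β e1 e2
        calc (∫ ω, (if a ≤ |d n ω| then |d n ω| else 0) ∂μ) / Real.sqrt n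
            ≤ ((a ^ (1+β))⁻¹ * (CC ^ q * (W n + W (n+1)))) / Real.sqrt n := by
              rw [div_eq_mul_inv, div_eq_mul_inv]
              exact mul_le_mul_of_nonneg_right hIn (by positivity)
          _ = K * (W n + W (n+1)) / (n:ℝ) ^ (1 + β/2) := hdiv
  · -- part 3
    refine ⟨1, one_pos, ?_⟩
    have hK0 : (0:ℝ) ≤ CC ^ q := by positivity
    apply Summable.of_nonneg_of_le _ _ (hcmp (CC ^ q) hK0)
    · intro n
      apply div_nonneg _ (by positivity)
      apply integral_nonneg
      intro ω; dsimp only; split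
      · positivity
      · exact le_rfl
    · intro n
      rcases Nat.eq_zero_or_pos n with hn | hn
      · subst hn
        simp [Real.zero_rpow (ne_of_gt hsβ)]
      · have hrn0 : (0:ℝ) < (n:ℝ) := by exact_mod_cast hn
        set c : ℝ := (n:ℝ) ^ ((1/2) * (2 - β)) with hcdef
        have hc0 : 0 < c := Real.rpow_pos_of_pos hrn0 _
        have hsq : Real.sqrt n = (n:ℝ) ^ ((1:ℝ)/2) := Real.sqrt_eq_rpow _
        have hsqc : (Real.sqrt n) ^ ((2:ℝ) - β) = c := by
          rw [hsq, hcdef, ← Real.rpow_mul hrn0.le]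
        have hptw : ∀ ω : ℕ → X,
            (if |d n ω| ≤ 1 * Real.sqrt n then d n ω ^ 4 else 0) ≤ c * |d n ω| ^ q := by
          intro ω
          split
          case isTrue hcase =>
            rw [one_mul] at hcase
            rcases eq_or_ne (d n ω) 0 with hz | hz
            · rw [hz]
              norm_num
              positivity
            · have hd0 : 0 < |d n ω| := abs_pos.2 hz
              have h4 : d n ω ^ 4 = |d n ω| ^ q * |d n ω| ^ ((2:ℝ) - β) := by
                rw [← Real.rpow_add hd0]
                rw [show q + ((2:ℝ) - β) = ((4:ℕ):ℝ) by rw [hqdef]; push_cast; ring]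
                rw [Real.rpow_natCast, pow_abs, abs_of_nonneg (by positivity)]
              rw [h4, mul_comm c _]
              apply mul_le_mul_of_nonneg_left _ (Real.rpow_nonneg (abs_nonneg _) _)
              rw [← hsqc]
              exact Real.rpow_le_rpow (abs_nonneg _) hcase (by linarith)
          case isFalse =>
            positivity
        have hIn : ∫ ω, (if |d n ω| ≤ 1 * Real.sqrt n then d n ω ^ 4 else 0) ∂μ
            ≤ c * (CC ^ q * (W n + W (n+1))) := by
          apply hmaster n _ hc0.le
          · intro ω; split
            · positivity
            · exact le_rfl
          · exact hptw
        have hdiv : (c * (CC ^ q * (W n + W (n+1)))) / (n:ℝ) ^ 2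
            = CC ^ q * (W n + W (n+1)) / (n:ℝ) ^ (1 + β/2) := by
          have hn2 : ((n:ℝ)) ^ (2:ℕ) = (n:ℝ) ^ ((2:ℝ)) := by
            rw [show ((2:ℝ)) = ((2:ℕ):ℝ) by norm_num, Real.rpow_natCast]
          have hsplit : (n:ℝ) ^ ((2:ℝ)) = c * (n:ℝ) ^ (1 + β/2) := by
            rw [hcdef, ← Real.rpow_add hrn0]; congr 1; ring
          rw [hn2, hsplit, mul_div_mul_left _ _ (ne_of_gt hc0)]
        calc (∫ ω, (if |d n ω| ≤ 1 * Real.sqrt n then d n ω ^ 4 else 0) ∂μ) / (n:ℝ) ^ 2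
            ≤ (c * (CC ^ q * (W n + W (n+1)))) / (n:ℝ) ^ 2 := by
              rw [div_eq_mul_inv, div_eq_mul_inv]
              exact mul_le_mul_of_nonneg_right hIn (by positivity)
          _ = CC ^ q * (W n + W (n+1)) / (n:ℝ) ^ (1 + β/2) := hdiv

end
end
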